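/- arXiv:1503.05225 — 6 statements merged into one kernel-verified Lean document; each statement's English description precedes it below -/
import Mathlib

section
/- For all x, y ∈ (0,1], the integral over ω ∈ ℝ of h(x,y,ω)·κ_χ(ω) dω equals f_χ(x,y) = (x−y)²/(x+y). (This is the kernel representation of the one-dimensional symmetrized χ² divergence.) -/
open Real MeasureTheory
open Set

/-- The kernel integrand `h(x,y,ω)`. -/
noncomputable def h (x y ω : ℝ) : ℝ :=
  (Real.sqrt x * Real.cos (ω * Real.log x) - Real.sqrt y * Real.cos (ω * Real.log y)) ^ 2 +
  (Real.sqrt x * Real.sin (ω * Real.log x) - Real.sqrt y * Real.sin (ω * Real.log y)) ^ 2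

/-- Hyperbolic secant. -/
noncomputable def sech (t : ℝ) : ℝ := 2 / (Real.exp t + Real.exp (-t))

/-- The JS kernel density `κ(ω)`. -/
noncomputable def kJ (ω : ℝ) : ℝ := 2 * sech (Real.pi * ω) / (Real.log 4 * (1 + 4 * ω ^ 2))

/-- The χ² kernel density `κ_χ(ω)`. -/
noncomputable def kChi (ω : ℝ) : ℝ := sech (Real.pi * ω)

/-- One-dimensional Jensen–Shannon divergence (with `0·log 0 = 0`, `f_J(0,0) = 0`,
which hold automatically since `Real.log 0 = 0` and `0/0 = 0` in Lean). -/
noncomputable def fJ (x y : ℝ) : ℝ :=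
  x * Real.log (2 * x / (x + y)) + y * Real.log (2 * y / (x + y))

/-- One-dimensional symmetrized χ² divergence (with `f_χ(0,0) = 0`,
which holds automatically since `0/0 = 0` in Lean). -/
noncomputable def fChi (x y : ℝ) : ℝ := (x - y) ^ 2 / (x + y)

/-- One-dimensional Hellinger distance. -/
noncomputable def fH (x y : ℝ) : ℝ := (Real.sqrt x - Real.sqrt y) ^ 2

lemma sech_eq_inv_cosh (t : ℝ) : sech t = 1 / Real.cosh t := by
  rw [sech, Real.cosh_eq]
  have h : Real.exp t + Real.exp (-t) > 0 := by positivity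
  field_simp

lemma sech_pos (t : ℝ) : 0 < sech t := by
  rw [sech]; positivity

lemma continuous_sech : Continuous sech := by
  apply Continuous.div continuous_const (by fun_prop)
  intro t
  positivity

lemma sech_le (ω : ℝ) : sech (Real.pi * ω) ≤ 2 * Real.exp (-|ω|) := by
  have h1 : Real.exp |ω| ≤ Real.exp (Real.pi * ω) + Real.exp (-(Real.pi * ω)) := by
    have hple : |ω| ≤ |Real.pi * ω| := by
      rw [abs_mul, abs_of_pos Real.pi_pos]
      nlinarith [Real.pi_gt_three, abs_nonneg ω]
    have h3 : Real.exp |ω| ≤ Real.exp |Real.pi * ω| := Real.exp_le_exp.mpr hple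
    rcases abs_cases (Real.pi * ω) with ⟨he, _⟩ | ⟨he, _⟩
    · rw [he] at h3; linarith [Real.exp_pos (-(Real.pi * ω))]
    · rw [he] at h3; linarith [Real.exp_pos (Real.pi * ω)]
  have h2 : (0:ℝ) < Real.exp |ω| := Real.exp_pos _
  calc sech (Real.pi * ω) ≤ 2 / Real.exp |ω| := div_le_div_of_nonneg_left (by norm_num) h2 h1
    _ = 2 * Real.exp (-|ω|) := by rw [Real.exp_neg]; ring

lemma integrable_exp_neg_abs : Integrable (fun ω : ℝ => Real.exp (-|ω|)) := by
  have h1 : IntegrableOn (fun ω : ℝ => Real.exp (-|ω|)) (Ioi 0) := by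
    refine (exp_neg_integrableOn_Ioi 0 one_pos).congr_fun ?_ measurableSet_Ioi
    intro x hx
    simp [abs_of_pos (mem_Ioi.mp hx)]
  have h2 : IntegrableOn (fun ω : ℝ => Real.exp (-|ω|)) (Iic 0) := by
    refine (integrableOn_exp_Iic 0).congr_fun ?_ measurableSet_Iic
    intro x hx
    simp [abs_of_nonpos (mem_Iic.mp hx)]
  have h3 := h2.union h1
  rwa [Iic_union_Ioi, integrableOn_univ] at h3

lemma integrable_sech : Integrable (fun ω : ℝ => sech (Real.pi * ω)) := by
  refine Integrable.mono' (integrable_exp_neg_abs.const_mul 2) ?_ ?_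
  · exact (continuous_sech.comp (continuous_const.mul continuous_id)).aestronglyMeasurable
  · filter_upwards with ω
    rw [Real.norm_eq_abs, abs_of_pos (sech_pos _)]
    exact sech_le ω

lemma integrable_cos_sech (b : ℝ) :
    Integrable (fun ω : ℝ => Real.cos (b * ω) * sech (Real.pi * ω)) := by
  refine Integrable.mono' integrable_sech ?_ ?_
  · exact ((Real.continuous_cos.comp (continuous_const.mul continuous_id)).mul
      (continuous_sech.comp (continuous_const.mul continuous_id))).aestronglyMeasurable
  · filter_upwards with ω
    rw [Real.norm_eq_abs, abs_mul, abs_of_pos (sech_pos _)]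
    calc |Real.cos (b * ω)| * sech (Real.pi * ω) ≤ 1 * sech (Real.pi * ω) :=
          mul_le_mul_of_nonneg_right (Real.abs_cos_le_one _) (sech_pos _).le
      _ = sech (Real.pi * ω) := one_mul _

lemma image_div_one_add : (fun u : ℝ => u / (1 + u)) '' (Ioi 0) = Ioo 0 1 := by
  ext t
  constructor
  · rintro ⟨u, hu, rfl⟩
    have hu' : (0:ℝ) < u := hu
    have h1 : (0:ℝ) < 1 + u := by linarith
    exact ⟨div_pos hu' h1, (div_lt_one h1).mpr (by linarith)⟩
  · rintro ⟨h0, h1⟩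
    have ht : (1:ℝ) - t ≠ 0 := by linarith
    refine ⟨t / (1 - t), div_pos h0 (by linarith), ?_⟩
    field_simp
    ring

lemma injOn_div_one_add : InjOn (fun u : ℝ => u / (1 + u)) (Ioi 0) := by
  intro u hu v hv heq
  have hu' : (0:ℝ) < u := hu
  have hv' : (0:ℝ) < v := hv
  have h1 : (1:ℝ) + u ≠ 0 := by linarith
  have h2 : (1:ℝ) + v ≠ 0 := by linarith
  field_simp at heq
  linarith

lemma hasDeriv_div_one_add' {u : ℝ} (hu : u ∈ Ioi (0:ℝ)) :
    HasDerivWithinAt (fun u : ℝ => u / (1 + u)) (1 / (1 + u) ^ 2) (Ioi 0) u := by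
  have hu' : (0:ℝ) < u := hu
  have h1 : (1:ℝ) + u ≠ 0 := by linarith
  have h := (hasDerivAt_id u).div ((hasDerivAt_id u).const_add 1) h1
  have e : (1 * (1 + u) - u * 1) / ((1+u)^2) = 1 / (1+u)^2 := by ring
  simp only [id] at h
  rw [← e]
  exact h.hasDerivWithinAt

lemma mellin_one_div_one_add {a : ℂ} (h1 : 0 < a.re) (h2 : a.re < 1) :
    ∫ t in Ioi (0:ℝ), (t:ℂ) ^ (a - 1) / (1 + t) = ↑Real.pi / Complex.sin (↑Real.pi * a) := by
  have hbeta := Complex.Gamma_mul_Gamma_eq_betaIntegral (s := a) (t := 1 - a) h1 (by simpa using h2)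
  rw [Complex.Gamma_mul_Gamma_one_sub, show a + (1 - a) = 1 by ring, Complex.Gamma_one, one_mul]
    at hbeta
  rw [hbeta]
  unfold Complex.betaIntegral
  rw [intervalIntegral.integral_of_le zero_le_one, MeasureTheory.integral_Ioc_eq_integral_Ioo,
      ← image_div_one_add,
      integral_image_eq_integral_abs_deriv_smul measurableSet_Ioi
        (fun u hu => hasDeriv_div_one_add' hu) injOn_div_one_add]
  apply setIntegral_congr_fun measurableSet_Ioi
  intro u hu
  have hu' : (0:ℝ) < u := hu
  have h1u : (0:ℝ) < 1 + u := by linarith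
  have hz : ((1 + u : ℝ) : ℂ) ≠ 0 := by exact_mod_cast h1u.ne'
  have harg : ((1 + u : ℝ) : ℂ).arg ≠ Real.pi := by
    rw [Complex.arg_ofReal_of_nonneg h1u.le]
    exact (Real.pi_ne_zero).symm
  show ((u:ℂ)) ^ (a-1) / (1 + (u:ℂ)) = _
  have e1 : ((u / (1 + u) : ℝ) : ℂ) = ((u:ℝ):ℂ) * (((1+u)⁻¹:ℝ):ℂ) := by push_cast; ring
  have hz' : (1:ℂ) + (u:ℂ) ≠ 0 := by push_cast at hz; exact hz
  have e2 : (1 : ℂ) - ((u:ℝ):ℂ) * (((1+u)⁻¹:ℝ):ℂ) = (((1+u)⁻¹:ℝ):ℂ) := by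
    push_cast
    field_simp
    ring
  beta_reduce
  rw [e1, e2, Complex.mul_cpow_ofReal_nonneg hu'.le (by positivity)]
  have einv : (((1 + u)⁻¹ : ℝ) : ℂ) = ((1 + u : ℝ) : ℂ)⁻¹ := by push_cast; ring
  rw [einv, Complex.inv_cpow _ _ harg, Complex.inv_cpow _ _ harg]
  have exp2 : (1 : ℂ) - a - 1 = -a := by ring
  rw [exp2, Complex.cpow_neg, inv_inv]
  have epow : ((1 + u : ℝ):ℂ) ^ a = ((1 + u : ℝ):ℂ) ^ (a - 1) * ((1 + u:ℝ):ℂ) ^ (1:ℂ) := by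
    rw [← Complex.cpow_add _ _ hz]
    norm_num
  have habs : |1 / (1 + u)^2| = 1/(1+u)^2 := abs_of_pos (by positivity)
  rw [habs, Complex.real_smul, epow, Complex.cpow_one]
  have hpw : ((1 + u : ℝ):ℂ) ^ (a-1) ≠ 0 := by
    intro hcon
    rw [Complex.cpow_eq_zero_iff] at hcon
    exact hz hcon.1
  rw [show (↑(1/(1+u)^2:ℝ):ℂ) * ((↑u:ℂ)^(a-1) * (((1+u:ℝ):ℂ)^(a-1))⁻¹ * (((1+u:ℝ):ℂ)^(a-1) * ((1+u:ℝ):ℂ))) = (↑u:ℂ)^(a-1) * ((↑(1/(1+u)^2:ℝ):ℂ) * ((1+u:ℝ):ℂ)) * ((((1+u:ℝ):ℂ)^(a-1))⁻¹ * ((1+u:ℝ):ℂ)^(a-1)) from by ring, inv_mul_cancel₀ hpw, mul_one]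
  push_cast
  rw [div_eq_iff hz']
  field_simp

lemma integral_cos_sech (b : ℝ) :
    ∫ ω : ℝ, Real.cos (b * ω) * sech (Real.pi * ω) = sech (b / 2) := by
  set a : ℂ := 1/2 + ((b/(2*Real.pi) : ℝ) : ℂ) * Complex.I with ha
  have hre : a.re = 1/2 := by rw [ha]; simp [Complex.add_re, Complex.mul_re, Complex.I_re, Complex.I_im, -Complex.ofReal_div]
  have hmel := mellin_one_div_one_add (a := a) (by rw [hre]; norm_num) (by rw [hre]; norm_num)
  -- substitution ω ↦ exp (2πω)
  have himg : (fun ω : ℝ => Real.exp (2*Real.pi*ω)) '' univ = Ioi 0 := by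
    rw [image_univ]
    have hc : (fun ω : ℝ => Real.exp (2*Real.pi*ω)) = Real.exp ∘ (fun ω : ℝ => 2*Real.pi*ω) := rfl
    rw [hc, Set.range_comp]
    have hsurj : range (fun ω : ℝ => 2*Real.pi*ω) = univ := by
      apply Set.range_eq_univ.mpr
      intro y
      exact ⟨y / (2*Real.pi), by field_simp⟩
    rw [hsurj, image_univ, Real.range_exp]
  have hderiv : ∀ ω ∈ (univ : Set ℝ), HasDerivWithinAt (fun ω : ℝ => Real.exp (2*Real.pi*ω))
      (2*Real.pi*Real.exp (2*Real.pi*ω)) univ ω := by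
    intro ω _
    have h1 : HasDerivAt (fun ω : ℝ => 2*Real.pi*ω) (2*Real.pi) ω := by
      simpa using (hasDerivAt_id ω).const_mul (2*Real.pi)
    have h2 : HasDerivAt (fun ω : ℝ => Real.exp (2*Real.pi*ω))
        (Real.exp (2*Real.pi*ω) * (2*Real.pi)) ω := (Real.hasDerivAt_exp (2*Real.pi*ω)).comp ω h1
    have h4 : 2*Real.pi*Real.exp (2*Real.pi*ω) = Real.exp (2*Real.pi*ω) * (2*Real.pi) := by ring
    rw [h4]
    exact h2.hasDerivWithinAt
  have hinj : InjOn (fun ω : ℝ => Real.exp (2*Real.pi*ω)) univ := by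
    intro u _ v _ hexp
    have := Real.exp_injective hexp
    have h2pi : (2*Real.pi) ≠ 0 := by positivity
    exact mul_left_cancel₀ h2pi this
  have hsub := integral_image_eq_integral_abs_deriv_smul MeasurableSet.univ hderiv hinj
    (fun t : ℝ => (t:ℂ) ^ (a - 1) / (1 + t))
  rw [himg, Measure.restrict_univ] at hsub
  have hpt : ∀ ω : ℝ, |2*Real.pi*Real.exp (2*Real.pi*ω)| •
      ((fun t : ℝ => (t:ℂ) ^ (a - 1) / (1 + t)) (Real.exp (2*Real.pi*ω)))
      = (Real.pi * sech (Real.pi * ω)) • Complex.exp (((b*ω : ℝ) : ℂ) * Complex.I) := by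
    intro ω
    have hEpos : 0 < Real.exp (2*Real.pi*ω) := Real.exp_pos _
    have hEne : ((Real.exp (2*Real.pi*ω) : ℝ):ℂ) ≠ 0 := by exact_mod_cast hEpos.ne'
    have hlog : Complex.log ((Real.exp (2*Real.pi*ω) : ℝ):ℂ) = ((2*Real.pi*ω : ℝ) : ℂ) := by
      rw [← Complex.ofReal_log hEpos.le, Real.log_exp]
    have hexparg : ((2*Real.pi*ω : ℝ) : ℂ) * (a - 1) =
        ((-(Real.pi*ω) : ℝ) : ℂ) + ((b*ω : ℝ) : ℂ) * Complex.I := by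
      rw [ha]
      have hπ : (Real.pi : ℂ) ≠ 0 := by exact_mod_cast Real.pi_ne_zero
      push_cast
      field_simp
      ring
    have hcpow : ((Real.exp (2*Real.pi*ω) : ℝ):ℂ) ^ (a - 1) =
        ((Real.exp (-(Real.pi*ω)) : ℝ) : ℂ) * Complex.exp (((b*ω : ℝ):ℂ) * Complex.I) := by
      rw [Complex.cpow_def_of_ne_zero hEne, hlog, hexparg, Complex.exp_add, Complex.ofReal_exp]
    have hscal : 2*Real.pi*Real.exp (2*Real.pi*ω) * Real.exp (-(Real.pi*ω))
        / (1 + Real.exp (2*Real.pi*ω)) = Real.pi * sech (Real.pi*ω) := by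
      rw [sech]
      have hd1 : (0:ℝ) < 1 + Real.exp (2*Real.pi*ω) := by positivity
      have hd2 : (0:ℝ) < Real.exp (Real.pi*ω) + Real.exp (-(Real.pi*ω)) := by positivity
      have e1 : Real.exp (2*Real.pi*ω) * Real.exp (-(Real.pi*ω)) = Real.exp (Real.pi*ω) := by
        rw [← Real.exp_add]; ring_nf
      have e2 : Real.exp (Real.pi*ω) * Real.exp (Real.pi*ω) = Real.exp (2*Real.pi*ω) := by
        rw [← Real.exp_add]; ring_nf
      have e3 : Real.exp (Real.pi*ω) * Real.exp (-(Real.pi*ω)) = 1 := by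
        rw [← Real.exp_add]; simp
      rw [mul_div_assoc', div_eq_div_iff hd1.ne' hd2.ne']
      linear_combination (2*Real.pi*(Real.exp (Real.pi*ω)+Real.exp (-(Real.pi*ω))))*e1
        + 2*Real.pi*e2 + 2*Real.pi*e3
    have habs : |2*Real.pi*Real.exp (2*Real.pi*ω)| = 2*Real.pi*Real.exp (2*Real.pi*ω) :=
      abs_of_pos (by positivity)
    show |2*Real.pi*Real.exp (2*Real.pi*ω)| •
        (((Real.exp (2*Real.pi*ω) : ℝ):ℂ) ^ (a - 1) / (1 + ((Real.exp (2*Real.pi*ω):ℝ):ℂ))) = _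
    rw [hcpow, habs]
    have h1E : (1 + Real.exp (2*Real.pi*ω)) ≠ 0 := by positivity
    calc (2*Real.pi*Real.exp (2*Real.pi*ω)) •
          (((Real.exp (-(Real.pi*ω)) : ℝ) : ℂ) * Complex.exp (((b*ω : ℝ):ℂ) * Complex.I)
            / (1 + ((Real.exp (2*Real.pi*ω):ℝ):ℂ)))
        = ((2*Real.pi*Real.exp (2*Real.pi*ω) * Real.exp (-(Real.pi*ω))
            / (1 + Real.exp (2*Real.pi*ω)) : ℝ) : ℂ) * Complex.exp (((b*ω : ℝ):ℂ) * Complex.I) := by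
          rw [Complex.real_smul]
          push_cast [h1E]
          ring
      _ = ((Real.pi * sech (Real.pi*ω) : ℝ) : ℂ) * Complex.exp (((b*ω : ℝ):ℂ) * Complex.I) := by
          rw [hscal]
      _ = (Real.pi * sech (Real.pi * ω)) • Complex.exp (((b*ω : ℝ) : ℂ) * Complex.I) :=
          Complex.real_smul.symm
  have hsub2 : (∫ t in Ioi (0:ℝ), (t:ℂ) ^ (a-1) / (1+t)) =
      ∫ ω : ℝ, (Real.pi * sech (Real.pi*ω)) • Complex.exp (((b*ω:ℝ):ℂ) * Complex.I) := by
    rw [hsub]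
    exact integral_congr_ae (Filter.Eventually.of_forall hpt)
  have hsin : (↑Real.pi : ℂ) / Complex.sin (↑Real.pi * a)
      = ((Real.pi / Real.cosh (b/2) : ℝ) : ℂ) := by
    have harg2 : (↑Real.pi : ℂ) * a = ((Real.pi/2 : ℝ):ℂ) + ((b/2 : ℝ):ℂ) * Complex.I := by
      rw [ha]
      have hπ : (Real.pi : ℂ) ≠ 0 := by exact_mod_cast Real.pi_ne_zero
      push_cast
      field_simp
    rw [harg2, Complex.sin_add, Complex.cos_mul_I, ← Complex.ofReal_sin, ← Complex.ofReal_cos,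
      Real.sin_pi_div_two, Real.cos_pi_div_two, ← Complex.ofReal_cosh]
    push_cast
    simp
  have hint : Integrable
      (fun ω : ℝ => (Real.pi * sech (Real.pi*ω)) • Complex.exp (((b*ω:ℝ):ℂ) * Complex.I)) := by
    refine Integrable.mono' (integrable_sech.const_mul Real.pi) ?_ ?_
    · apply Continuous.aestronglyMeasurable
      apply Continuous.smul (f := fun ω : ℝ => Real.pi * sech (Real.pi*ω)) (g := fun ω : ℝ => Complex.exp (((b*ω:ℝ):ℂ) * Complex.I))
      · exact continuous_const.mul (continuous_sech.comp (continuous_const.mul continuous_id))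
      · exact Complex.continuous_exp.comp
          ((Complex.continuous_ofReal.comp (continuous_const.mul continuous_id)).mul
            continuous_const)
    · filter_upwards with ω
      rw [norm_smul, Complex.norm_exp_ofReal_mul_I, mul_one,
        Real.norm_eq_abs, abs_of_pos (mul_pos Real.pi_pos (sech_pos _))]
  have hC : (∫ ω : ℝ, (Real.pi * sech (Real.pi*ω)) • Complex.exp (((b*ω:ℝ):ℂ) * Complex.I))
      = ((Real.pi / Real.cosh (b/2) : ℝ):ℂ) := by
    rw [← hsub2, hmel, hsin]
  have hre3 := Complex.reCLM.integral_comp_comm hint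
  rw [hC] at hre3
  simp only [Complex.reCLM_apply, Complex.smul_re, Complex.exp_ofReal_mul_I_re,
    Complex.ofReal_re, smul_eq_mul] at hre3
  have hre4 : ∫ x : ℝ, Real.pi * (Real.cos (b*x) * sech (Real.pi*x)) = Real.pi / Real.cosh (b/2) := by
    rw [← hre3]
    exact integral_congr_ae (Filter.Eventually.of_forall fun x => by ring)
  rw [MeasureTheory.integral_const_mul] at hre4
  have hπ : Real.pi ≠ 0 := Real.pi_ne_zero
  have : Real.pi / Real.cosh (b/2) = Real.pi * (1 / Real.cosh (b/2)) := by ring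
  rw [this] at hre4
  have := mul_left_cancel₀ hπ hre4
  rw [this, sech_eq_inv_cosh]

/-- kernel representation of the one-dimensional symmetrized χ² divergence. -/
theorem chiSq_kernel_representation :
    ∀ x ∈ Set.Ioc (0 : ℝ) 1, ∀ y ∈ Set.Ioc (0 : ℝ) 1,
      ∫ ω : ℝ, h x y ω * kChi ω = fChi x y := by
  rintro x ⟨hx, _⟩ y ⟨hy, _⟩
  set b := Real.log x - Real.log y with hb
  have hsx : Real.sqrt x ^ 2 = x := Real.sq_sqrt hx.le
  have hsy : Real.sqrt y ^ 2 = y := Real.sq_sqrt hy.le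
  have hsxp : 0 < Real.sqrt x := Real.sqrt_pos.mpr hx
  have hsyp : 0 < Real.sqrt y := Real.sqrt_pos.mpr hy
  have hexpand : ∀ ω : ℝ, h x y ω * kChi ω
      = (x + y) * sech (Real.pi * ω)
        - (2 * Real.sqrt x * Real.sqrt y) * (Real.cos (b * ω) * sech (Real.pi * ω)) := by
    intro ω
    have hcos : Real.cos (b * ω) = Real.cos (ω * Real.log x) * Real.cos (ω * Real.log y)
        + Real.sin (ω * Real.log x) * Real.sin (ω * Real.log y) := by
      rw [show b * ω = ω * Real.log x - ω * Real.log y from by rw [hb]; ring, Real.cos_sub]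
    have h1 := Real.sin_sq_add_cos_sq (ω * Real.log x)
    have h2 := Real.sin_sq_add_cos_sq (ω * Real.log y)
    rw [h, kChi, hcos]
    linear_combination sech (Real.pi*ω) * Real.sqrt x ^ 2 * h1
      + sech (Real.pi*ω) * Real.sqrt y ^ 2 * h2
      + sech (Real.pi*ω) * hsx + sech (Real.pi*ω) * hsy
  have h0 : (∫ ω : ℝ, sech (Real.pi * ω)) = 1 := by
    have h00 := integral_cos_sech 0
    simp only [zero_mul, Real.cos_zero, one_mul] at h00
    rw [h00]
    norm_num [sech, Real.exp_zero]
  have hsech : sech (b/2) = 2 * (Real.sqrt x * Real.sqrt y) / (x + y) := by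
    have ex : Real.sqrt x = Real.exp (Real.log x * (1/2)) := by
      rw [Real.sqrt_eq_rpow, Real.rpow_def_of_pos hx]
    have ey : Real.sqrt y = Real.exp (Real.log y * (1/2)) := by
      rw [Real.sqrt_eq_rpow, Real.rpow_def_of_pos hy]
    have e1 : Real.exp (b/2) = Real.sqrt x / Real.sqrt y := by
      rw [ex, ey, ← Real.exp_sub]
      congr 1
      rw [hb]
      ring
    have e2 : Real.exp (-(b/2)) = Real.sqrt y / Real.sqrt x := by
      rw [ex, ey, ← Real.exp_sub]
      congr 1
      rw [hb]
      ring
    rw [sech, e1, e2]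
    have hxy : x + y ≠ 0 := by positivity
    rw [div_add_div _ _ hsyp.ne' hsxp.ne', div_div_eq_mul_div]
    have : Real.sqrt x * Real.sqrt x + Real.sqrt y * Real.sqrt y = x + y := by
      nlinarith [hsx, hsy]
    rw [this]
    ring
  calc ∫ ω : ℝ, h x y ω * kChi ω
      = ∫ ω : ℝ, ((x + y) * sech (Real.pi * ω)
          - (2 * Real.sqrt x * Real.sqrt y) * (Real.cos (b * ω) * sech (Real.pi * ω))) :=
        integral_congr_ae (Filter.Eventually.of_forall hexpand)
    _ = (x + y) * (∫ ω : ℝ, sech (Real.pi * ω))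
          - (2 * Real.sqrt x * Real.sqrt y) * ∫ ω : ℝ, Real.cos (b * ω) * sech (Real.pi * ω) := by
        rw [integral_sub (integrable_sech.const_mul _) ((integrable_cos_sech b).const_mul _),
          MeasureTheory.integral_const_mul, MeasureTheory.integral_const_mul]
    _ = (x + y) - (2 * Real.sqrt x * Real.sqrt y) * (2 * (Real.sqrt x * Real.sqrt y) / (x + y)) := by
        rw [h0, integral_cos_sech b, hsech, mul_one]
    _ = fChi x y := by
        rw [fChi]
        have hxy : x + y ≠ 0 := by positivity
        field_simp
        nlinarith [hsx, hsy]
end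

section
/- The function κ is a probability density on ℝ: the integral over ω ∈ ℝ of 2·sech(πω)/((ln 4)·(1 + 4ω²)) dω equals 1. -/
open Real MeasureTheory

namespace KJAux

open Set



lemma cpow_pos_eq {r : ℝ} (hr : 0 < r) (w : ℂ) :
    (r : ℂ) ^ w = Complex.exp (w * Real.log r) := by
  rw [Complex.cpow_def_of_ne_zero (by exact_mod_cast hr.ne'), ← Complex.ofReal_log hr.le,
    mul_comm]

lemma ofReal_pos_eq_exp_log {r : ℝ} (hr : 0 < r) :
    (r : ℂ) = Complex.exp ((Real.log r : ℂ)) := by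
  rw [← Complex.ofReal_exp, Real.exp_log hr]

/-- The Beta integral on `(0,∞)`: `∫ t^(s-1)/(1+t) = π / sin (π s)` for `0 < re s < 1`. -/
lemma beta_open (s : ℂ) (hs0 : 0 < s.re) (hs1 : s.re < 1) :
    ∫ t in Ioi (0:ℝ), ((t:ℂ) ^ (s - 1)) / (1 + (t:ℂ)) = ↑π / Complex.sin (↑π * s) := by
  have himg : (fun x : ℝ => x / (1 - x)) '' Ioo 0 1 = Ioi 0 := by
    ext y
    constructor
    · rintro ⟨x, ⟨hx0, hx1⟩, rfl⟩
      exact div_pos hx0 (by linarith)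
    · intro hy
      refine ⟨y / (1 + y), ⟨div_pos hy (by linarith [hy.out]), ?_⟩, ?_⟩
      · rw [div_lt_one (by linarith [hy.out])]; linarith [hy.out]
      · have h1 : (0:ℝ) < 1 + y := by linarith [hy.out]
        field_simp
        ring
  have hder : ∀ x ∈ Ioo (0:ℝ) 1, HasDerivWithinAt (fun x : ℝ => x / (1 - x))
      (((1 - x) ^ 2)⁻¹) (Ioo 0 1) x := by
    intro x hx
    have h1 : (1:ℝ) - x ≠ 0 := ne_of_gt (by linarith [hx.2])
    have : HasDerivAt (fun x : ℝ => x / (1 - x)) (((1 - x) ^ 2)⁻¹) x := by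
      have := (hasDerivAt_id x).div ((hasDerivAt_id x).const_sub 1) h1
      refine this.congr_deriv ?_
      simp only [id]
      field_simp
      try ring
    exact this.hasDerivWithinAt
  have hinj : InjOn (fun x : ℝ => x / (1 - x)) (Ioo 0 1) := by
    intro a ha b hb hab
    have ha' : (1:ℝ) - a ≠ 0 := ne_of_gt (by linarith [ha.2])
    have hb' : (1:ℝ) - b ≠ 0 := ne_of_gt (by linarith [hb.2])
    field_simp at hab
    nlinarith [hab]
  have key := integral_image_eq_integral_abs_deriv_smul measurableSet_Ioo hder hinj
    (fun t : ℝ => ((t:ℂ) ^ (s - 1)) / (1 + (t:ℂ)))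
  rw [himg] at key
  rw [key]
  have hpt : ∀ x ∈ Ioo (0:ℝ) 1,
      |((1 - x) ^ 2)⁻¹| • ((((x / (1 - x) : ℝ) : ℂ)) ^ (s - 1) / (1 + ((x / (1 - x) : ℝ) : ℂ)))
        = (x:ℂ) ^ (s - 1) * (1 - (x:ℂ)) ^ ((1 - s) - 1) := by
    intro x hx
    obtain ⟨hx0, hx1⟩ := hx
    have h1x : (0:ℝ) < 1 - x := by linarith
    have hq : (0:ℝ) < x / (1 - x) := div_pos hx0 h1x
    have hc : (1:ℂ) - (x:ℂ) = ((1 - x : ℝ) : ℂ) := by push_cast; ring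
    have hden : (1:ℂ) + ((x / (1 - x) : ℝ) : ℂ) = (((1 - x)⁻¹ : ℝ) : ℂ) := by
      have hne : (1:ℂ) - (x:ℂ) ≠ 0 := by
        rw [hc]; exact_mod_cast h1x.ne'
      push_cast
      field_simp
      ring
    rw [hden, hc, cpow_pos_eq hq, cpow_pos_eq hx0, cpow_pos_eq h1x,
      Real.log_div hx0.ne' h1x.ne',
      abs_of_pos (show (0:ℝ) < ((1 - x) ^ 2)⁻¹ by positivity), Complex.real_smul]
    have e1 : ((((1 - x) ^ 2)⁻¹ : ℝ) : ℂ) = Complex.exp (-(2 * (Real.log (1 - x) : ℂ))) := by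
      have h : ((1 - x) ^ 2)⁻¹ = Real.exp (-(2 * Real.log (1 - x))) := by
        rw [Real.exp_neg, show (2:ℝ) * Real.log (1 - x) = ((2:ℕ):ℝ) * Real.log (1 - x) by
          norm_num, Real.exp_nat_mul, Real.exp_log h1x]
      rw [h, Complex.ofReal_exp]
      push_cast
      ring_nf
    have e2 : (((1 - x)⁻¹ : ℝ) : ℂ) = Complex.exp (-(Real.log (1 - x) : ℂ)) := by
      rw [show ((1 - x)⁻¹ : ℝ) = Real.exp (-Real.log (1 - x)) by
        rw [Real.exp_neg, Real.exp_log h1x], Complex.ofReal_exp]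
      push_cast
      ring_nf
    rw [e1, e2]
    simp only [div_eq_mul_inv, ← Complex.exp_neg, ← Complex.exp_add]
    congr 1
    push_cast
    ring
  rw [setIntegral_congr_fun measurableSet_Ioo hpt]
  have hbeta : ∫ x in Ioo (0:ℝ) 1, (x:ℂ) ^ (s - 1) * (1 - (x:ℂ)) ^ ((1 - s) - 1)
      = Complex.betaIntegral s (1 - s) := by
    rw [Complex.betaIntegral, intervalIntegral.integral_of_le zero_le_one,
      integral_Ioc_eq_integral_Ioo]
  rw [hbeta]
  have h1s : 0 < (1 - s).re := by simp [Complex.sub_re]; linarith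
  have hGG := Complex.Gamma_mul_Gamma_eq_betaIntegral hs0 h1s
  have : s + (1 - s) = 1 := by ring
  rw [this, Complex.Gamma_one, one_mul] at hGG
  rw [← hGG, Complex.Gamma_mul_Gamma_one_sub]

lemma sre : ∀ c : ℝ, ((1/2 : ℂ) + (c/2) * Complex.I).re = 1/2 := by
  intro c
  simp [Complex.add_re, Complex.mul_I_re]

/-- `∫_0^∞ u^{ic}/(1+u²) du = π/(2 cosh(πc/2))`. -/
lemma mellin_ic (c : ℝ) :
    ∫ u in Ioi (0:ℝ), Complex.exp (Complex.I * c * Real.log u) / (1 + (u:ℂ)^2)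
      = ((π / (2 * Real.cosh (π * c / 2)) : ℝ) : ℂ) := by
  set s : ℂ := (1/2 : ℂ) + ((c:ℂ)/2) * Complex.I with hs
  have hb := beta_open s (by rw [sre]; norm_num) (by rw [sre]; norm_num)
  have himg : (fun u : ℝ => u ^ 2) '' Ioi 0 = Ioi 0 := by
    ext y
    constructor
    · rintro ⟨u, hu, rfl⟩
      exact pow_pos hu.out 2
    · intro hy
      exact ⟨Real.sqrt y, Real.sqrt_pos.2 hy, Real.sq_sqrt hy.out.le⟩
  have hder : ∀ u ∈ Ioi (0:ℝ), HasDerivWithinAt (fun u : ℝ => u ^ 2) (2 * u) (Ioi 0) u := by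
    intro u hu
    have := hasDerivAt_pow 2 u
    norm_num at this
    exact this.hasDerivWithinAt
  have hinj : InjOn (fun u : ℝ => u ^ 2) (Ioi 0) := by
    intro a ha b hb h
    simp only at h
    exact le_antisymm (by nlinarith [ha.out, hb.out]) (by nlinarith [ha.out, hb.out])
  have key := integral_image_eq_integral_abs_deriv_smul measurableSet_Ioi hder hinj
    (fun t : ℝ => ((t:ℂ) ^ (s - 1)) / (1 + (t:ℂ)))
  rw [himg] at key
  rw [key] at hb
  have hpt : ∀ u ∈ Ioi (0:ℝ),
      |2 * u| • ((((u ^ 2 : ℝ) : ℂ)) ^ (s - 1) / (1 + ((u ^ 2 : ℝ) : ℂ)))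
        = 2 * (Complex.exp (Complex.I * c * Real.log u) / (1 + (u:ℂ)^2)) := by
    intro u hu
    have hu0 : (0:ℝ) < u := hu.out
    have hq : (0:ℝ) < u ^ 2 := pow_pos hu0 2
    rw [cpow_pos_eq hq, abs_of_pos (by positivity), Complex.real_smul,
      Real.log_pow, show (((u:ℝ)^2 : ℝ):ℂ) = (u:ℂ)^2 by push_cast; ring]
    rw [show ((2 * u : ℝ) : ℂ) = 2 * Complex.exp ((Real.log u : ℂ)) by
      rw [← ofReal_pos_eq_exp_log hu0]; push_cast; ring]
    have hE : Complex.exp (Complex.I * c * Real.log u)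
        = Complex.exp ((Real.log u : ℂ)) * Complex.exp ((s - 1) * (((2:ℕ) * Real.log u : ℝ) : ℂ)) := by
      rw [← Complex.exp_add]
      congr 1
      push_cast [hs]
      ring
    rw [hE]
    ring
  rw [setIntegral_congr_fun measurableSet_Ioi hpt, integral_const_mul] at hb
  have hsin : Complex.sin (↑π * s) = ((Real.cosh (π * c / 2) : ℝ) : ℂ) := by
    have : (π : ℂ) * s = ((π/2 : ℝ) : ℂ) + ((π * c / 2 : ℝ) : ℂ) * Complex.I := by
      rw [hs]; push_cast; ring
    rw [this, Complex.sin_add, Complex.cos_mul_I, ← Complex.ofReal_sin, ← Complex.ofReal_cos,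
      Real.sin_pi_div_two, Real.cos_pi_div_two, Complex.ofReal_cosh]
    simp
  rw [hsin] at hb
  have hX : (∫ u in Ioi (0:ℝ), Complex.exp (Complex.I * c * Real.log u) / (1 + (u:ℂ)^2))
      = (π:ℂ) / ((Real.cosh (π * c / 2) : ℝ) : ℂ) / (2:ℂ) := by
    rw [eq_div_iff (two_ne_zero)]
    linear_combination hb
  rw [hX]
  push_cast
  ring

/-- The key cosine-Mellin integral. -/
lemma cos_mellin (c : ℝ) :
    ∫ u in Ioi (0:ℝ), Real.cos (c * Real.log u) / (1 + u^2)
      = π / (2 * Real.cosh (π * c / 2)) := by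
  have hmeas : AEStronglyMeasurable
      (fun u : ℝ => Complex.exp (Complex.I * c * Real.log u) / (1 + (u:ℂ)^2))
      (volume.restrict (Ioi 0)) := by
    apply Measurable.aestronglyMeasurable
    exact (Complex.measurable_exp.comp
      ((Complex.measurable_ofReal.comp Real.measurable_log).const_mul (Complex.I * c))).div
      (measurable_const.add ((Complex.measurable_ofReal.comp measurable_id).pow_const 2))
  have hbd : IntegrableOn (fun u : ℝ => (1 + u^2)⁻¹) (Ioi 0) :=
    integrable_inv_one_add_sq.integrableOn
  have hint : IntegrableOn
      (fun u : ℝ => Complex.exp (Complex.I * c * Real.log u) / (1 + (u:ℂ)^2)) (Ioi 0) := by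
    apply Integrable.mono' hbd hmeas
    filter_upwards with u
    rw [norm_div]
    have h1 : ‖Complex.exp (Complex.I * c * Real.log u)‖ = 1 := by
      rw [Complex.norm_exp]
      have : (Complex.I * c * (Real.log u : ℂ)).re = 0 := by
        simp [Complex.mul_re, Complex.mul_im]
      rw [this, Real.exp_zero]
    have h2 : ‖(1 : ℂ) + (u:ℂ)^2‖ = 1 + u^2 := by
      rw [show (1:ℂ) + (u:ℂ)^2 = ((1 + u^2 : ℝ) : ℂ) by push_cast; ring,
        Complex.norm_real, Real.norm_eq_abs, abs_of_pos (by positivity)]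
    rw [h1, h2, one_div]
  have hre := integral_re hint
  rw [mellin_ic c] at hre
  have hpt : ∀ u : ℝ,
      RCLike.re (Complex.exp (Complex.I * c * Real.log u) / (1 + (u:ℂ)^2))
        = Real.cos (c * Real.log u) / (1 + u^2) := by
    intro u
    have h1 : Complex.I * c * (Real.log u : ℂ) = ((c * Real.log u : ℝ) : ℂ) * Complex.I := by
      push_cast; ring
    have h2 : (1 : ℂ) + (u:ℂ)^2 = (((1 + u^2 : ℝ)) : ℂ) := by push_cast; ring
    rw [RCLike.re_to_complex, h1, h2, Complex.div_ofReal_re, Complex.exp_ofReal_mul_I_re]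
  calc ∫ u in Ioi (0:ℝ), Real.cos (c * Real.log u) / (1 + u^2)
      = ∫ u in Ioi (0:ℝ),
          RCLike.re (Complex.exp (Complex.I * c * Real.log u) / (1 + (u:ℂ)^2)) := by
        refine integral_congr_ae ?_
        filter_upwards with u
        rw [hpt]
    _ = π / (2 * Real.cosh (π * c / 2)) := by
        rw [hre, RCLike.re_to_complex, Complex.ofReal_re]

/-- Laplace transform of cosine: `∫_0^∞ e^{-t} cos(bt) dt = 1/(1+b²)`. -/
lemma laplace_cos (b : ℝ) :
    ∫ t in Ioi (0:ℝ), Real.exp (-t) * Real.cos (b * t) = 1 / (1 + b^2) := by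
  have hb2 : (0:ℝ) < 1 + b^2 := by positivity
  set F : ℝ → ℝ := fun t => Real.exp (-t) * (b * Real.sin (b*t) - Real.cos (b*t)) / (1 + b^2)
    with hF
  have hder : ∀ t ∈ Ici (0:ℝ), HasDerivAt F (Real.exp (-t) * Real.cos (b * t)) t := by
    intro t _
    have h1 : HasDerivAt (fun t : ℝ => Real.exp (-t)) (-Real.exp (-t)) t := by
      simpa [Function.comp_def] using (Real.hasDerivAt_exp (-t)).comp t (hasDerivAt_neg t)
    have h2 : HasDerivAt (fun t : ℝ => b * Real.sin (b*t) - Real.cos (b*t))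
        (b * (Real.cos (b*t) * b) + Real.sin (b*t) * b) t := by
      have hs : HasDerivAt (fun t : ℝ => Real.sin (b*t)) (Real.cos (b*t) * b) t := by
        simpa [Function.comp_def] using (Real.hasDerivAt_sin (b*t)).comp t ((hasDerivAt_id t).const_mul b)
      have hc : HasDerivAt (fun t : ℝ => Real.cos (b*t)) (-Real.sin (b*t) * b) t := by
        simpa [Function.comp_def] using (Real.hasDerivAt_cos (b*t)).comp t ((hasDerivAt_id t).const_mul b)
      exact ((hs.const_mul b).sub hc).congr_deriv (by ring)
    have := (h1.mul h2).div_const (1 + b^2)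
    refine this.congr_deriv ?_
    rw [div_eq_iff hb2.ne']
    ring
  have hint : IntegrableOn (fun t : ℝ => Real.exp (-t) * Real.cos (b * t)) (Ioi 0) := by
    apply Integrable.mono' (exp_neg_integrableOn_Ioi 0 one_pos)
    · exact ((Real.measurable_exp.comp measurable_neg).mul
        (Real.measurable_cos.comp (measurable_id.const_mul b))).aestronglyMeasurable
    · filter_upwards with t
      rw [Real.norm_eq_abs, abs_mul, Real.abs_exp]
      calc Real.exp (-t) * |Real.cos (b*t)| ≤ Real.exp (-t) * 1 :=
            mul_le_mul_of_nonneg_left (Real.abs_cos_le_one _) (Real.exp_pos _).le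
        _ = Real.exp (-1 * t) := by rw [mul_one]; ring_nf
  have htend : Filter.Tendsto F Filter.atTop (nhds 0) := by
    have hbound : ∀ t : ℝ, |F t| ≤ (|b| + 1) / (1 + b^2) * Real.exp (-t) := by
      intro t
      have h5 : |b * Real.sin (b*t) - Real.cos (b*t)| ≤ |b| + 1 := by
        calc |b * Real.sin (b*t) - Real.cos (b*t)|
            ≤ |b * Real.sin (b*t)| + |Real.cos (b*t)| := abs_sub _ _
          _ ≤ |b| * 1 + 1 := by
              rw [abs_mul]
              gcongr
              · exact Real.abs_sin_le_one _
              · exact Real.abs_cos_le_one _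
          _ = |b| + 1 := by ring
      calc |F t| = |b * Real.sin (b*t) - Real.cos (b*t)| * Real.exp (-t) / (1 + b^2) := by
            rw [hF]
            simp only
            rw [abs_div, abs_of_pos hb2, abs_mul, Real.abs_exp]
            ring
        _ ≤ (|b| + 1) / (1 + b^2) * Real.exp (-t) := by
            rw [div_mul_eq_mul_div]
            gcongr
    have h0 : Filter.Tendsto (fun t : ℝ => (|b| + 1) / (1 + b^2) * Real.exp (-t))
        Filter.atTop (nhds 0) := by
      rw [show (0:ℝ) = (|b| + 1) / (1 + b^2) * 0 by ring]
      exact (Real.tendsto_exp_neg_atTop_nhds_zero).const_mul _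
    apply squeeze_zero_norm hbound h0
  have key := integral_Ioi_of_hasDerivAt_of_tendsto
    ((hder 0 self_mem_Ici).continuousAt.continuousWithinAt)
    (fun t ht => hder t (mem_Ici.mpr (le_of_lt ht)))
    hint htend
  rw [key, hF]
  simp [Real.exp_zero]
  ring

/-- `∫_0^∞ e^{-t}/cosh t dt = log 2`. -/
lemma exp_div_cosh : ∫ t in Ioi (0:ℝ), Real.exp (-t) / Real.cosh t = Real.log 2 := by
  have hpt : ∀ t : ℝ, Real.exp (-t) / Real.cosh t
      = 2 * Real.exp (-2 * t) / (1 + Real.exp (-2 * t)) := by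
    intro t
    rw [Real.cosh_eq]
    have h1 : Real.exp t > 0 := Real.exp_pos t
    have h2 : Real.exp (-t) = (Real.exp t)⁻¹ := Real.exp_neg t
    have h3 : Real.exp (-2 * t) = ((Real.exp t)^2)⁻¹ := by
      rw [show (-2 : ℝ) * t = -(2*t) by ring, Real.exp_neg, show (2:ℝ)*t = ((2:ℕ):ℝ)*t by
        norm_num, Real.exp_nat_mul]
    rw [h2, h3]
    have h4 : (0:ℝ) < 1 + ((Real.exp t)^2)⁻¹ := by positivity
    field_simp
  set F : ℝ → ℝ := fun t => -Real.log (1 + Real.exp (-2 * t)) with hF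
  have hder : ∀ t ∈ Ici (0:ℝ), HasDerivAt F (2 * Real.exp (-2*t) / (1 + Real.exp (-2*t))) t := by
    intro t _
    have h1 : HasDerivAt (fun t : ℝ => Real.exp (-2 * t)) (-2 * Real.exp (-2*t)) t := by
      have h0 : HasDerivAt (fun x : ℝ => -2 * x) (-2) t := by
        simpa using (hasDerivAt_id t).const_mul (-2)
      convert h0.exp using 1
      ring
    have h2 : (0:ℝ) < 1 + Real.exp (-2*t) := by positivity
    have h3 : HasDerivAt (fun t : ℝ => 1 + Real.exp (-2 * t)) (-2 * Real.exp (-2*t)) t :=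
      h1.const_add 1
    have := (h3.log h2.ne').neg
    refine this.congr_deriv ?_
    ring
  have hint : IntegrableOn (fun t : ℝ => 2 * Real.exp (-2*t) / (1 + Real.exp (-2*t))) (Ioi 0) := by
    apply Integrable.mono' ((exp_neg_integrableOn_Ioi 0 two_pos).const_mul 2)
    · apply Measurable.aestronglyMeasurable
      exact ((Real.measurable_exp.comp (measurable_id.const_mul (-2))).const_mul 2).div
        (measurable_const.add (Real.measurable_exp.comp (measurable_id.const_mul (-2))))
    · filter_upwards with t
      have h2 : (0:ℝ) < 1 + Real.exp (-2*t) := by positivity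
      have hpos : (0:ℝ) < 2 * Real.exp (-2*t) / (1 + Real.exp (-2*t)) := by positivity
      rw [Real.norm_eq_abs, abs_of_pos hpos, div_le_iff₀ h2]
      have : (1:ℝ) ≤ 1 + Real.exp (-2*t) := by linarith [Real.exp_pos (-2*t)]
      nlinarith [Real.exp_pos (-2*t)]
  have htend : Filter.Tendsto F Filter.atTop (nhds 0) := by
    rw [hF, show (0:ℝ) = -Real.log (1 + 0) by simp]
    apply Filter.Tendsto.neg
    apply Filter.Tendsto.log
    · apply Filter.Tendsto.const_add
      rw [show (fun t : ℝ => Real.exp (-2*t)) = fun t : ℝ => Real.exp (-(2*t)) by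
        funext t; ring_nf]
      exact Real.tendsto_exp_neg_atTop_nhds_zero.comp (Filter.tendsto_id.const_mul_atTop two_pos)
    · norm_num
  have key := integral_Ioi_of_hasDerivAt_of_tendsto
    ((hder 0 self_mem_Ici).continuousAt.continuousWithinAt)
    (fun t ht => hder t (mem_Ici.mpr (le_of_lt ht)))
    hint htend
  calc ∫ t in Ioi (0:ℝ), Real.exp (-t) / Real.cosh t
      = ∫ t in Ioi (0:ℝ), 2 * Real.exp (-2*t) / (1 + Real.exp (-2*t)) := by
        refine integral_congr_ae ?_
        filter_upwards with t
        exact hpt t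
    _ = Real.log 2 := by
        rw [key, hF]
        norm_num

/-- Change of variables `u = exp(πω)`. -/
lemma stepB :
    (∫ ω : ℝ, sech (π * ω) / (1 + 4 * ω ^ 2))
      = ∫ u in Ioi (0:ℝ), (2/π) * ((1 + u^2)⁻¹ * (1 + (2 * Real.log u / π)^2)⁻¹) := by
  have hπ : (0:ℝ) < π := Real.pi_pos
  have himg : (fun ω : ℝ => Real.exp (π * ω)) '' univ = Ioi 0 := by
    ext y
    simp only [image_univ, Set.mem_range, Set.mem_Ioi]
    constructor
    · rintro ⟨ω, rfl⟩
      exact Real.exp_pos _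
    · intro hy
      refine ⟨Real.log y / π, ?_⟩
      rw [mul_div_cancel₀ _ hπ.ne', Real.exp_log hy]
  have hder : ∀ ω ∈ (univ : Set ℝ), HasDerivWithinAt (fun ω : ℝ => Real.exp (π * ω))
      (π * Real.exp (π * ω)) univ ω := by
    intro ω _
    have h0 : HasDerivAt (fun ω : ℝ => π * ω) π ω := by
      simpa using (hasDerivAt_id ω).const_mul π
    have := h0.exp
    rw [mul_comm] at this
    exact this.hasDerivWithinAt
  have hinj : InjOn (fun ω : ℝ => Real.exp (π * ω)) univ := by
    intro a _ b _ h
    have := Real.exp_injective h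
    exact mul_left_cancel₀ hπ.ne' this
  have key := integral_image_eq_integral_abs_deriv_smul MeasurableSet.univ hder hinj
    (fun u : ℝ => (2/π) * ((1 + u^2)⁻¹ * (1 + (2 * Real.log u / π)^2)⁻¹))
  rw [himg, setIntegral_univ] at key
  rw [key]
  congr 1
  funext ω
  have he := Real.exp_pos (π * ω)
  rw [abs_of_pos (by positivity : (0:ℝ) < π * Real.exp (π * ω)), smul_eq_mul, Real.log_exp,
    sech, Real.exp_neg, show 2 * (π * ω) / π = 2 * ω by field_simp]
  have h1 : (0:ℝ) < Real.exp (π*ω) + (Real.exp (π*ω))⁻¹ := by positivity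
  have h3 : (0:ℝ) < 1 + 4*ω^2 := by positivity
  have h4 : (0:ℝ) < 1 + (2*ω)^2 := by positivity
  have h2 : (0:ℝ) < 1 + Real.exp (π*ω)^2 := by positivity
  field_simp
  ring

theorem kJ_is_probability_density' :
    ∫ ω : ℝ, 2 * sech (Real.pi * ω) / (Real.log 4 * (1 + 4 * ω ^ 2)) = 1 := by
  have hπ : (0:ℝ) < π := Real.pi_pos
  set f : ℝ → ℝ → ℝ := fun u t =>
    (2/π) * ((1 + u^2)⁻¹ * (Real.exp (-t) * Real.cos ((2 * Real.log u / π) * t))) with hf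
  have hbd : Integrable (fun u : ℝ => (1 + u^2)⁻¹) (volume.restrict (Ioi 0)) :=
    integrable_inv_one_add_sq.integrableOn
  have hexpint : Integrable (fun t : ℝ => Real.exp (-t)) (volume.restrict (Ioi 0)) := by
    have := exp_neg_integrableOn_Ioi 0 one_pos
    simpa [IntegrableOn] using this
  have hFub : Integrable (Function.uncurry f)
      ((volume.restrict (Ioi 0)).prod (volume.restrict (Ioi 0))) := by
    have hg : Integrable (fun p : ℝ × ℝ => ((2/π) * (1 + p.1^2)⁻¹) * Real.exp (-p.2))
        ((volume.restrict (Ioi 0)).prod (volume.restrict (Ioi 0))) :=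
      Integrable.mul_prod (hbd.const_mul (2/π)) hexpint
    apply Integrable.mono' hg
    · apply Measurable.aestronglyMeasurable
      apply Measurable.const_mul
      apply Measurable.mul
      · exact ((measurable_fst.pow_const 2).const_add 1).inv
      · apply Measurable.mul
        · exact Real.measurable_exp.comp measurable_snd.neg
        · exact Real.measurable_cos.comp
            ((((Real.measurable_log.comp measurable_fst).const_mul 2).div_const π).mul
              measurable_snd)
    · filter_upwards with p
      have hc : |Real.cos ((2 * Real.log p.1 / π) * p.2)| ≤ 1 := Real.abs_cos_le_one _
      have hi : (0:ℝ) < (1 + p.1^2)⁻¹ := by positivity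
      calc ‖f p.1 p.2‖
          = (2/π) * ((1 + p.1^2)⁻¹ * (Real.exp (-p.2)
              * |Real.cos ((2 * Real.log p.1 / π) * p.2)|)) := by
            rw [hf, Real.norm_eq_abs]
            simp only
            rw [abs_mul, abs_mul, abs_mul, abs_of_pos (by positivity : (0:ℝ) < 2/π),
              abs_of_pos hi, Real.abs_exp]
        _ ≤ (2/π) * ((1 + p.1^2)⁻¹ * (Real.exp (-p.2) * 1)) := by gcongr
        _ = ((2/π) * (1 + p.1^2)⁻¹) * Real.exp (-p.2) := by ring
  have step1 : ∫ ω : ℝ, 2 * sech (π * ω) / (Real.log 4 * (1 + 4 * ω ^ 2))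
      = (2 / Real.log 4) * ∫ ω : ℝ, sech (π * ω) / (1 + 4 * ω ^ 2) := by
    rw [← integral_const_mul]
    congr 1
    funext ω
    have h3 : (0:ℝ) < 1 + 4*ω^2 := by positivity
    have hlog4 : Real.log 4 ≠ 0 := by
      have : Real.log 4 > 0 := Real.log_pos (by norm_num)
      exact this.ne'
    field_simp
    try ring
  have step3 : (∫ u in Ioi (0:ℝ), (2/π) * ((1 + u^2)⁻¹ * (1 + (2 * Real.log u / π)^2)⁻¹))
      = ∫ u in Ioi (0:ℝ), ∫ t in Ioi (0:ℝ), f u t := by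
    refine integral_congr_ae (Filter.Eventually.of_forall fun u => ?_)
    rw [hf]
    simp only
    rw [integral_const_mul, integral_const_mul]
    congr 1
    rw [laplace_cos (2 * Real.log u / π), one_div]
  have step4 : (∫ u in Ioi (0:ℝ), ∫ t in Ioi (0:ℝ), f u t)
      = ∫ t in Ioi (0:ℝ), ∫ u in Ioi (0:ℝ), f u t := integral_integral_swap hFub
  have step5 : (∫ t in Ioi (0:ℝ), ∫ u in Ioi (0:ℝ), f u t)
      = ∫ t in Ioi (0:ℝ), Real.exp (-t) / Real.cosh t := by
    refine integral_congr_ae (Filter.Eventually.of_forall fun t => ?_)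
    show (∫ u in Ioi (0:ℝ), f u t) = Real.exp (-t) / Real.cosh t
    have hptw : ∀ u : ℝ, f u t
        = ((2/π) * Real.exp (-t)) * (Real.cos ((2*t/π) * Real.log u) / (1 + u^2)) := by
      intro u
      rw [hf]
      simp only
      rw [show (2 * Real.log u / π) * t = (2*t/π) * Real.log u by ring]
      ring
    rw [integral_congr_ae (Filter.Eventually.of_forall fun u => hptw u), integral_const_mul,
      cos_mellin (2*t/π), show π * (2*t/π) / 2 = t by field_simp]
    rw [eq_div_iff (Real.cosh_pos t).ne']
    field_simp
  have hlog2 : Real.log 4 = 2 * Real.log 2 := by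
    rw [show (4:ℝ) = 2^2 by norm_num, Real.log_pow]
    norm_num
  rw [step1, stepB, step3, step4, step5, exp_div_cosh, hlog2]
  have h2 : Real.log 2 ≠ 0 := (Real.log_pos (by norm_num)).ne'
  field_simp


end KJAux

/-- `κ` is a probability density on ℝ. -/
theorem kJ_is_probability_density : ∫ ω : ℝ, kJ ω = 1 := by
  have := KJAux.kJ_is_probability_density'
  simpa [kJ] using this
end

section
/- (Quantization) Fix ε > 0 and x, y ∈ (0,1]. Define the quantized function h̃(x,y,ω) = h(x,y, (ε/16)·⌊16ω/ε⌋) (i.e., h evaluated at the largest grid point ω_i = ε·i/16 with ω_i ≤ ω, i ∈ ℤ). Then for all real a ≤ b: |∫_a^b h(x,y,ω)·κ(ω) dω − ∫_a^b h̃(x,y,ω)·κ(ω) dω| ≤ ε. -/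
open Real MeasureTheory

lemma abs_cos_sub_cos_le' (a b : ℝ) : |Real.cos a - Real.cos b| ≤ |a - b| := by
  rw [Real.cos_sub_cos]
  have h1 : |Real.sin ((a + b) / 2)| ≤ 1 := Real.abs_sin_le_one _
  have h2 : |Real.sin ((a - b) / 2)| ≤ |(a - b) / 2| := Real.abs_sin_le_abs
  have h3 : |(a - b) / 2| = |a - b| / 2 := by rw [abs_div]; norm_num
  rw [h3] at h2
  rw [abs_mul, abs_mul, abs_neg]
  have h0 : |(2:ℝ)| = 2 := by norm_num
  rw [h0]
  nlinarith [abs_nonneg (Real.sin ((a - b) / 2)), abs_nonneg (a - b),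
    abs_nonneg (Real.sin ((a + b) / 2))]

lemma h_eq (x y : ℝ) (hx : 0 ≤ x) (hy : 0 ≤ y) (ω : ℝ) :
    h x y ω = x + y - 2 * Real.sqrt x * Real.sqrt y *
      Real.cos (ω * Real.log x - ω * Real.log y) := by
  have hx2 : Real.sqrt x ^ 2 = x := Real.sq_sqrt hx
  have hy2 : Real.sqrt y ^ 2 = y := Real.sq_sqrt hy
  have hA := Real.sin_sq_add_cos_sq (ω * Real.log x)
  have hB := Real.sin_sq_add_cos_sq (ω * Real.log y)
  rw [h, Real.cos_sub]
  nlinarith [hx2, hy2, hA, hB]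

lemma sqrt_neg_log_le (x : ℝ) (hx0 : 0 < x) (_hx1 : x ≤ 1) :
    Real.sqrt x * (-Real.log x) ≤ 2 * (1 - Real.sqrt x) := by
  have hs0 : 0 < Real.sqrt x := Real.sqrt_pos.2 hx0
  have hlog : Real.log (Real.sqrt x) = Real.log x / 2 := Real.log_sqrt hx0.le
  have h1 : Real.log (Real.sqrt x)⁻¹ ≤ (Real.sqrt x)⁻¹ - 1 :=
    Real.log_le_sub_one_of_pos (by positivity)
  rw [Real.log_inv, hlog] at h1
  have h2 : Real.sqrt x * (Real.sqrt x)⁻¹ = 1 := mul_inv_cancel₀ hs0.ne'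
  have h3 := mul_le_mul_of_nonneg_left h1 hs0.le
  nlinarith [h3, h2]

lemma h_lip (x y : ℝ) (hx : x ∈ Set.Ioc (0:ℝ) 1) (hy : y ∈ Set.Ioc (0:ℝ) 1) (ω₁ ω₂ : ℝ) :
    |h x y ω₁ - h x y ω₂| ≤ 4 * |ω₁ - ω₂| := by
  obtain ⟨hx0, hx1⟩ := hx; obtain ⟨hy0, hy1⟩ := hy
  have hs0 : 0 < Real.sqrt x := Real.sqrt_pos.2 hx0
  have ht0 : 0 < Real.sqrt y := Real.sqrt_pos.2 hy0
  have hs1 : Real.sqrt x ≤ 1 := by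
    rw [show (1:ℝ) = Real.sqrt 1 by simp]; exact Real.sqrt_le_sqrt hx1
  have ht1 : Real.sqrt y ≤ 1 := by
    rw [show (1:ℝ) = Real.sqrt 1 by simp]; exact Real.sqrt_le_sqrt hy1
  set s := Real.sqrt x
  set t := Real.sqrt y
  rw [h_eq x y hx0.le hy0.le, h_eq x y hx0.le hy0.le]
  have heq : (x + y - 2 * s * t * Real.cos (ω₁ * Real.log x - ω₁ * Real.log y)) -
      (x + y - 2 * s * t * Real.cos (ω₂ * Real.log x - ω₂ * Real.log y)) =
      2 * s * t * (Real.cos (ω₂ * Real.log x - ω₂ * Real.log y) -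
        Real.cos (ω₁ * Real.log x - ω₁ * Real.log y)) := by ring
  rw [heq, abs_mul]
  have hcos : |Real.cos (ω₂ * Real.log x - ω₂ * Real.log y) -
      Real.cos (ω₁ * Real.log x - ω₁ * Real.log y)| ≤ |ω₁ - ω₂| * |Real.log x - Real.log y| := by
    calc _ ≤ |(ω₂ * Real.log x - ω₂ * Real.log y) - (ω₁ * Real.log x - ω₁ * Real.log y)| :=
          abs_cos_sub_cos_le' _ _
      _ = |(ω₂ - ω₁) * (Real.log x - Real.log y)| := by ring_nf
      _ = |ω₂ - ω₁| * |Real.log x - Real.log y| := abs_mul _ _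
      _ = |ω₁ - ω₂| * |Real.log x - Real.log y| := by rw [abs_sub_comm]
  have hlx : Real.log x ≤ 0 := Real.log_nonpos hx0.le hx1
  have hly : Real.log y ≤ 0 := Real.log_nonpos hy0.le hy1
  have hd : |Real.log x - Real.log y| ≤ (-Real.log x) + (-Real.log y) := by
    rw [abs_sub_le_iff]; constructor <;> linarith
  have h1 : s * (-Real.log x) ≤ 2 * (1 - s) := sqrt_neg_log_le x hx0 hx1
  have h2 : t * (-Real.log y) ≤ 2 * (1 - t) := sqrt_neg_log_le y hy0 hy1
  have hst : 2 * s * t * |Real.log x - Real.log y| ≤ 4 := by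
    nlinarith [mul_le_mul_of_nonneg_left hd (by positivity : (0:ℝ) ≤ 2 * s * t),
      mul_le_mul_of_nonneg_left h1 ht0.le, mul_le_mul_of_nonneg_left h2 hs0.le,
      mul_pos hs0 ht0]
  have habs : |2 * s * t| = 2 * s * t := abs_of_pos (by positivity)
  rw [habs]
  calc 2 * s * t * |Real.cos (ω₂ * Real.log x - ω₂ * Real.log y) -
        Real.cos (ω₁ * Real.log x - ω₁ * Real.log y)|
      ≤ 2 * s * t * (|ω₁ - ω₂| * |Real.log x - Real.log y|) :=
        mul_le_mul_of_nonneg_left hcos (by positivity)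
    _ = (2 * s * t * |Real.log x - Real.log y|) * |ω₁ - ω₂| := by ring
    _ ≤ 4 * |ω₁ - ω₂| := mul_le_mul_of_nonneg_right hst (abs_nonneg _)

lemma log_four_pos : 0 < Real.log 4 := Real.log_pos (by norm_num)

lemma kJ_nonneg (ω : ℝ) : 0 ≤ kJ ω := by
  unfold kJ sech
  have h1 : 0 < Real.exp (Real.pi * ω) + Real.exp (-(Real.pi * ω)) := by positivity
  have := log_four_pos
  positivity

lemma kJ_le (ω : ℝ) : kJ ω ≤ 2 / (Real.log 4 * (1 + 4 * ω ^ 2)) := by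
  unfold kJ sech
  have h1 : (2:ℝ) ≤ Real.exp (Real.pi * ω) + Real.exp (-(Real.pi * ω)) := by
    nlinarith [Real.add_one_le_exp (Real.pi * ω), Real.add_one_le_exp (-(Real.pi * ω))]
  have hs : 2 / (Real.exp (Real.pi * ω) + Real.exp (-(Real.pi * ω))) ≤ 1 := by
    rw [div_le_one (by linarith)]; linarith
  have hden : 0 < Real.log 4 * (1 + 4 * ω ^ 2) := by
    have := log_four_pos; positivity
  rw [div_le_div_iff₀ hden hden]
  nlinarith [hs, hden]

lemma h_nonneg (x y ω : ℝ) : 0 ≤ h x y ω := by unfold h; positivity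

lemma h_le_four (x y : ℝ) (hx : x ∈ Set.Ioc (0:ℝ) 1) (hy : y ∈ Set.Ioc (0:ℝ) 1) (ω : ℝ) :
    h x y ω ≤ 4 := by
  obtain ⟨hx0, hx1⟩ := hx; obtain ⟨hy0, hy1⟩ := hy
  have hs0 : 0 ≤ Real.sqrt x := Real.sqrt_nonneg x
  have ht0 : 0 ≤ Real.sqrt y := Real.sqrt_nonneg y
  have hs1 : Real.sqrt x ≤ 1 := by
    rw [show (1:ℝ) = Real.sqrt 1 by simp]; exact Real.sqrt_le_sqrt hx1
  have ht1 : Real.sqrt y ≤ 1 := by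
    rw [show (1:ℝ) = Real.sqrt 1 by simp]; exact Real.sqrt_le_sqrt hy1
  rw [h_eq x y hx0.le hy0.le]
  have hc := Real.neg_one_le_cos (ω * Real.log x - ω * Real.log y)
  nlinarith [mul_nonneg (mul_nonneg hs0 ht0) (by linarith : (0:ℝ) ≤ 1 + Real.cos (ω * Real.log x - ω * Real.log y))]

lemma kJ_continuous : Continuous kJ := by
  unfold kJ sech
  apply Continuous.div
  · apply Continuous.mul continuous_const
    apply Continuous.div continuous_const
    · fun_prop
    · intro t; positivity
  · fun_prop
  · intro t
    have := log_four_pos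
    positivity

lemma h_continuous (x y : ℝ) : Continuous (fun ω => h x y ω) := by
  unfold h; fun_prop

/-- Quantization: replacing `ω` by the largest grid point
`ω_i = ε·i/16 ≤ ω` changes the integral by at most `ε`. -/
theorem js_quantization (ε : ℝ) (hε : 0 < ε)
    (x : ℝ) (hx : x ∈ Set.Ioc (0 : ℝ) 1) (y : ℝ) (hy : y ∈ Set.Ioc (0 : ℝ) 1)
    (a b : ℝ) (hab : a ≤ b) :
    |(∫ ω in a..b, h x y ω * kJ ω) -
      ∫ ω in a..b, h x y (ε / 16 * (⌊16 * ω / ε⌋ : ℤ)) * kJ ω| ≤ ε := by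
  have hl4 := log_four_pos
  set q : ℝ → ℝ := fun ω => ε / 16 * (⌊16 * ω / ε⌋ : ℤ) with hq
  -- quantization error bound
  have hqdist : ∀ ω : ℝ, |ω - q ω| ≤ ε / 16 := by
    intro ω
    have hfl : ((⌊16 * ω / ε⌋ : ℤ) : ℝ) ≤ 16 * ω / ε := Int.floor_le _
    have hfl2 : 16 * ω / ε < (⌊16 * ω / ε⌋ : ℤ) + 1 := Int.lt_floor_add_one _
    have hω : ω = ε / 16 * (16 * ω / ε) := by field_simp
    rw [abs_le]
    constructor
    · simp only [hq]
      nlinarith [mul_le_mul_of_nonneg_left hfl (by positivity : (0:ℝ) ≤ ε / 16)]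
    · simp only [hq]
      nlinarith [mul_le_mul_of_nonneg_left hfl2.le (by positivity : (0:ℝ) ≤ ε / 16)]
  -- measurability of quantized function
  have hqmeas : Measurable q := by
    apply Measurable.const_mul
    exact (measurable_id.comp' measurable_from_top).comp
      (Int.measurable_floor.comp (by fun_prop : Measurable fun ω : ℝ => 16 * ω / ε))
  have hgmeas : Measurable (fun ω => h x y (q ω) * kJ ω) :=
    ((h_continuous x y).measurable.comp hqmeas).mul kJ_continuous.measurable
  -- integrability
  have hf_int : IntervalIntegrable (fun ω => h x y ω * kJ ω) volume a b :=
    ((h_continuous x y).mul kJ_continuous).intervalIntegrable a b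
  have hbound : ∀ ω : ℝ, |h x y (q ω) * kJ ω| ≤ 8 / Real.log 4 := by
    intro ω
    rw [abs_of_nonneg (mul_nonneg (h_nonneg _ _ _) (kJ_nonneg _))]
    have h1 : kJ ω ≤ 2 / (Real.log 4 * (1 + 4 * ω ^ 2)) := kJ_le ω
    have h2 : 2 / (Real.log 4 * (1 + 4 * ω ^ 2)) ≤ 2 / Real.log 4 := by
      apply div_le_div_of_nonneg_left (by norm_num) hl4
      nlinarith [sq_nonneg ω]
    calc h x y (q ω) * kJ ω ≤ 4 * (2 / Real.log 4) :=
          mul_le_mul (h_le_four x y hx hy _) (h1.trans h2) (kJ_nonneg _)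
            (by norm_num)
      _ = 8 / Real.log 4 := by ring
  have hg_int : IntervalIntegrable (fun ω => h x y (q ω) * kJ ω) volume a b := by
    apply IntervalIntegrable.mono_fun
      (intervalIntegrable_const (c := 8 / Real.log 4) (μ := volume) (a := a) (b := b))
    · exact hgmeas.aestronglyMeasurable
    · apply ae_of_all
      intro ω
      simp only [Real.norm_eq_abs]
      rw [abs_of_nonneg (by positivity : (0:ℝ) ≤ 8 / Real.log 4)]
      exact hbound ω
  -- pointwise bound on the difference
  have hptwise : ∀ ω ∈ Set.Icc a b,
      |h x y ω * kJ ω - h x y (q ω) * kJ ω| ≤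
        ε / (2 * Real.log 4) * (1 / (1 + 4 * ω ^ 2)) := by
    intro ω _
    have e1 : h x y ω * kJ ω - h x y (q ω) * kJ ω = (h x y ω - h x y (q ω)) * kJ ω := by ring
    rw [e1, abs_mul, abs_of_nonneg (kJ_nonneg ω)]
    have h1 : |h x y ω - h x y (q ω)| ≤ 4 * (ε / 16) := by
      calc |h x y ω - h x y (q ω)| ≤ 4 * |ω - q ω| := h_lip x y hx hy ω (q ω)
        _ ≤ 4 * (ε / 16) := by nlinarith [hqdist ω]
    calc |h x y ω - h x y (q ω)| * kJ ω
        ≤ (4 * (ε / 16)) * (2 / (Real.log 4 * (1 + 4 * ω ^ 2))) :=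
          mul_le_mul h1 (kJ_le ω) (kJ_nonneg ω) (by positivity)
      _ = ε / (2 * Real.log 4) * (1 / (1 + 4 * ω ^ 2)) := by
          field_simp
          ring
  -- integral of the bound
  have hFTC : (∫ ω in a..b, (1 : ℝ) / (1 + 4 * ω ^ 2)) =
      Real.arctan (2 * b) / 2 - Real.arctan (2 * a) / 2 := by
    apply intervalIntegral.integral_eq_sub_of_hasDerivAt
    · intro z _
      have h1 : HasDerivAt (fun t : ℝ => 2 * t) 2 z := by
        simpa using (hasDerivAt_id z).const_mul 2
      have h2 := (Real.hasDerivAt_arctan (2 * z)).comp z h1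
      have h3 := h2.div_const 2
      convert h3 using 1
      · rfl
      · rfl
      ring
    · apply Continuous.intervalIntegrable
      apply Continuous.div continuous_const (by fun_prop)
      intro t; positivity
  have harctan : Real.arctan (2 * b) / 2 - Real.arctan (2 * a) / 2 ≤ Real.pi / 2 := by
    have h1 := Real.arctan_lt_pi_div_two (2 * b)
    have h2 := Real.neg_pi_div_two_lt_arctan (2 * a)
    linarith
  -- assemble
  have key : |(∫ ω in a..b, h x y ω * kJ ω) - ∫ ω in a..b, h x y (q ω) * kJ ω| ≤
      ε / (2 * Real.log 4) * (Real.pi / 2) := by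
    rw [← intervalIntegral.integral_sub hf_int hg_int]
    calc |∫ ω in a..b, (h x y ω * kJ ω - h x y (q ω) * kJ ω)|
        ≤ ∫ ω in a..b, |h x y ω * kJ ω - h x y (q ω) * kJ ω| :=
          intervalIntegral.abs_integral_le_integral_abs hab
      _ ≤ ∫ ω in a..b, ε / (2 * Real.log 4) * (1 / (1 + 4 * ω ^ 2)) := by
          apply intervalIntegral.integral_mono_on hab
          · exact (hf_int.sub hg_int).abs
          · apply IntervalIntegrable.const_mul
            apply Continuous.intervalIntegrable
            apply Continuous.div continuous_const (by fun_prop)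
            intro t; positivity
          · exact hptwise
      _ = ε / (2 * Real.log 4) * ∫ ω in a..b, (1 : ℝ) / (1 + 4 * ω ^ 2) := by
          rw [← intervalIntegral.integral_const_mul]
      _ ≤ ε / (2 * Real.log 4) * (Real.pi / 2) := by
          rw [hFTC]
          apply mul_le_mul_of_nonneg_left harctan (by positivity)
  have hfinal : ε / (2 * Real.log 4) * (Real.pi / 2) ≤ ε := by
    have hpi : Real.pi < 3.15 := Real.pi_lt_d2
    have hlog2 : (0.6931471803 : ℝ) < Real.log 2 := Real.log_two_gt_d9
    have hl4' : Real.log 4 = 2 * Real.log 2 := by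
      rw [show (4:ℝ) = 2 ^ 2 by norm_num, Real.log_pow]; push_cast; ring
    rw [div_mul_eq_mul_div, div_le_iff₀ (by positivity)]
    nlinarith [Real.pi_pos]
  exact key.trans hfinal
end

section
/- For all x, y ∈ [0,1], f_H(x,y) ≤ 2·f_J(x,y), i.e., (√x − √y)² ≤ 2·(x·ln(2x/(x+y)) + y·ln(2y/(x+y))). -/
open Real MeasureTheory

lemma hasDerivAt_F {t : ℝ} (h1 : -1 < t) (h2 : t < 1) :
    HasDerivAt (fun t : ℝ => Real.log (1+t) - Real.log (1-t) - 2*t)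
      (1/(1+t) + 1/(1-t) - 2) t := by
  have hp : (0:ℝ) < 1 + t := by linarith
  have hm : (0:ℝ) < 1 - t := by linarith
  have d1 : HasDerivAt (fun t : ℝ => Real.log (1+t)) (1/(1+t)) t := by
    simpa using (((hasDerivAt_id t).const_add 1).log hp.ne')
  have d2 : HasDerivAt (fun t : ℝ => Real.log (1-t)) (-1/(1-t)) t := by
    simpa using (((hasDerivAt_id t).const_sub 1).log hm.ne')
  have d3 : HasDerivAt (fun t : ℝ => 2*t) 2 t := by
    simpa using (hasDerivAt_id t).const_mul 2
  have := (d1.sub d2).sub d3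
  refine HasDerivAt.congr_deriv this ?_
  field_simp
  ring

lemma lemA : ∀ t ∈ Set.Ico (0:ℝ) 1, 2*t ≤ Real.log (1+t) - Real.log (1-t) := by
  have hmono : MonotoneOn (fun t : ℝ => Real.log (1+t) - Real.log (1-t) - 2*t)
      (Set.Ico (0:ℝ) 1) := by
    apply monotoneOn_of_deriv_nonneg (convex_Ico 0 1)
    · intro t ht
      exact (hasDerivAt_F (by linarith [ht.1]) ht.2).continuousAt.continuousWithinAt
    · intro t ht
      rw [interior_Ico] at ht
      exact (hasDerivAt_F (by linarith [ht.1]) ht.2).differentiableAt.differentiableWithinAt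
    · intro t ht
      rw [interior_Ico] at ht
      rw [(hasDerivAt_F (by linarith [ht.1]) ht.2).deriv]
      have hp : (0:ℝ) < 1 + t := by linarith [ht.1]
      have hm : (0:ℝ) < 1 - t := by linarith [ht.2]
      have key : 1/(1+t) + 1/(1-t) - 2 = 2*t^2/((1+t)*(1-t)) := by
        field_simp; ring
      rw [key]; positivity
  intro t ht
  have := hmono (Set.mem_Ico.mpr ⟨le_refl 0, one_pos⟩) ht ht.1
  simp at this
  linarith

lemma hasDerivAt_G {t : ℝ} (h1 : -1 < t) (h2 : t < 1) :
    HasDerivAt (fun t : ℝ => (1+t) * Real.log (1+t) + (1-t) * Real.log (1-t) - t^2)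
      (Real.log (1+t) - Real.log (1-t) - 2*t) t := by
  have hp : (0:ℝ) < 1 + t := by linarith
  have hm : (0:ℝ) < 1 - t := by linarith
  have a1 : HasDerivAt (fun t : ℝ => 1 + t) 1 t := (hasDerivAt_id t).const_add 1
  have a2 : HasDerivAt (fun t : ℝ => 1 - t) (-1) t := by
    simpa using (hasDerivAt_id t).const_sub 1
  have l1 : HasDerivAt (fun t : ℝ => Real.log (1+t)) (1/(1+t)) t := by
    simpa using a1.log hp.ne'
  have l2 : HasDerivAt (fun t : ℝ => Real.log (1-t)) (-1/(1-t)) t := by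
    simpa using a2.log hm.ne'
  have d1 := a1.mul l1
  have d2 := a2.mul l2
  have d3 : HasDerivAt (fun t : ℝ => t^2) (2*t) t := by
    simpa using hasDerivAt_pow 2 t
  have := (d1.add d2).sub d3
  refine HasDerivAt.congr_deriv this ?_
  field_simp
  ring

lemma lemB : ∀ t ∈ Set.Ico (0:ℝ) 1,
    t^2 ≤ (1+t) * Real.log (1+t) + (1-t) * Real.log (1-t) := by
  have hmono : MonotoneOn
      (fun t : ℝ => (1+t) * Real.log (1+t) + (1-t) * Real.log (1-t) - t^2)
      (Set.Ico (0:ℝ) 1) := by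
    apply monotoneOn_of_deriv_nonneg (convex_Ico 0 1)
    · intro t ht
      exact (hasDerivAt_G (by linarith [ht.1]) ht.2).continuousAt.continuousWithinAt
    · intro t ht
      rw [interior_Ico] at ht
      exact (hasDerivAt_G (by linarith [ht.1]) ht.2).differentiableAt.differentiableWithinAt
    · intro t ht
      rw [interior_Ico] at ht
      rw [(hasDerivAt_G (by linarith [ht.1]) ht.2).deriv]
      have := lemA t ⟨ht.1.le, ht.2⟩
      linarith
  intro t ht
  have := hmono (Set.mem_Ico.mpr ⟨le_refl 0, one_pos⟩) ht ht.1
  simp at this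
  linarith


lemma key (x y : ℝ) (hy : 0 ≤ y) (hxy : y ≤ x) : fH x y ≤ 2 * fJ x y := by
  have hx : 0 ≤ x := hy.trans hxy
  rcases eq_or_lt_of_le hy with hy0 | hy0
  · -- y = 0
    rcases eq_or_lt_of_le hx with hx0 | hx0
    · simp [fH, fJ, ← hx0, ← hy0]
    · have hyz : y = 0 := hy0.symm
      subst hyz
      have hfH : fH x 0 = x := by
        simp [fH, Real.sq_sqrt hx]
      have hfJ : fJ x 0 = x * Real.log 2 := by
        simp [fJ, mul_div_assoc, div_self hx0.ne']
      rw [hfH, hfJ]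
      nlinarith [Real.log_two_gt_d9, hx0]
  · -- 0 < y ≤ x
    have hs : (0:ℝ) < x + y := by linarith
    set u : ℝ := (x - y) / (x + y) with hu
    have hu0 : 0 ≤ u := div_nonneg (by linarith) hs.le
    have hu1 : u < 1 := by
      rw [hu, div_lt_one hs]; linarith
    have h1u : 1 + u = 2*x/(x+y) := by
      rw [hu]; field_simp; ring
    have h2u : 1 - u = 2*y/(x+y) := by
      rw [hu]; field_simp; ring
    have hB := lemB u ⟨hu0, hu1⟩
    -- 2 * fJ = (x+y) * ((1+u) log(1+u) + (1-u) log(1-u))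
    have hfJ : 2 * fJ x y = (x+y) * ((1+u) * Real.log (1+u) + (1-u) * Real.log (1-u)) := by
      rw [fJ, h1u, h2u]
      field_simp
    have step2 : (x-y)^2/(x+y) ≤ 2 * fJ x y := by
      rw [hfJ]
      have : (x-y)^2/(x+y) = (x+y) * u^2 := by
        rw [hu]; field_simp
      rw [this]
      exact mul_le_mul_of_nonneg_left hB hs.le
    refine le_trans ?_ step2
    -- fH ≤ fChi
    rw [fH, le_div_iff₀ hs]
    have sx := Real.sq_sqrt hx
    have sy := Real.sq_sqrt hy
    nlinarith [Real.sqrt_nonneg x, Real.sqrt_nonneg y,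
      mul_nonneg (Real.sqrt_nonneg x) (Real.sqrt_nonneg y), sq_nonneg (Real.sqrt x - Real.sqrt y)]

/-- `f_H(x,y) ≤ 2·f_J(x,y)` for `x, y ∈ [0,1]`. -/
theorem hellinger_le_two_js :
    ∀ x ∈ Set.Icc (0 : ℝ) 1, ∀ y ∈ Set.Icc (0 : ℝ) 1,
      fH x y ≤ 2 * fJ x y := by
  intro x hx y hy
  rcases le_total y x with hle | hle
  · exact key x y hy.1 hle
  · have hs : fH x y = fH y x := by rw [fH, fH]; ring
    have hj : fJ x y = fJ y x := by rw [fJ, fJ, add_comm y x]; ring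
    rw [hs, hj]
    exact key y x hx.1 hle
end

section
/- For all x, y ∈ (0,1] and all ω ∈ ℝ: h(x,y,ω) ≤ f_H(x,y)·(1 + 2|ω|)². -/
open Real MeasureTheory

/-- For `s ≥ 1`, `2 log s ≤ s - 1/s`. -/
lemma two_log_le (s : ℝ) (hs : 1 ≤ s) : 2 * Real.log s ≤ s - s⁻¹ := by
  have hs0 : 0 < s := lt_of_lt_of_le one_pos hs
  have h1 : Real.log s ≤ Real.sinh (Real.log s) := by
    rcases eq_or_lt_of_le (Real.log_nonneg hs) with h | h
    · rw [← h]; simp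
    · exact (Real.self_lt_sinh_iff.mpr h).le
  rw [Real.sinh_log hs0] at h1
  linarith

/-- For `0 < b ≤ a`, `√(ab) (log a - log b) ≤ a - b`. -/
lemma sqrt_mul_log_sub_le (a b : ℝ) (hb : 0 < b) (hba : b ≤ a) :
    Real.sqrt (a * b) * (Real.log a - Real.log b) ≤ a - b := by
  have ha : 0 < a := lt_of_lt_of_le hb hba
  set s := Real.sqrt (a / b) with hs
  have hs1 : 1 ≤ s := by
    rw [hs, show (1:ℝ) = Real.sqrt 1 by simp]
    exact Real.sqrt_le_sqrt ((one_le_div hb).mpr hba)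
  have hs0 : 0 < s := lt_of_lt_of_le one_pos hs1
  have hsq : s ^ 2 = a / b := Real.sq_sqrt (by positivity)
  have hlog : Real.log a - Real.log b = 2 * Real.log s := by
    rw [← Real.log_div (ne_of_gt ha) (ne_of_gt hb), ← hsq, Real.log_pow]
    push_cast; ring
  have hab : Real.sqrt (a * b) = b * s := by
    rw [hs, ← Real.sqrt_mul_self hb.le, ← Real.sqrt_mul (by positivity)]
    congr 1
    field_simp
    ring
    exact Real.sq_sqrt (by positivity)
  have key := two_log_le s hs1
  have ha_eq : a = b * s ^ 2 := by
    field_simp at hsq ⊢; linarith [hsq]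
  rw [hab, hlog, ha_eq]
  have hsinv : s * s⁻¹ = 1 := mul_inv_cancel₀ (ne_of_gt hs0)
  nlinarith [mul_le_mul_of_nonneg_left key (by positivity : (0:ℝ) ≤ b * s)]

/-- Symmetric square version: `√x √y (log x - log y)² ≤ 4 (√x - √y)²` for `0 < x, y`. -/
lemma sqrt_log_sq_le (x y : ℝ) (hx : 0 < x) (hy : 0 < y) :
    Real.sqrt x * Real.sqrt y * (Real.log x - Real.log y) ^ 2
      ≤ 4 * (Real.sqrt x - Real.sqrt y) ^ 2 := by
  wlog hxy : y ≤ x generalizing x y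
  · have := this y x hy hx (le_of_not_ge hxy)
    calc Real.sqrt x * Real.sqrt y * (Real.log x - Real.log y) ^ 2
        = Real.sqrt y * Real.sqrt x * (Real.log y - Real.log x) ^ 2 := by ring
      _ ≤ 4 * (Real.sqrt y - Real.sqrt x) ^ 2 := this
      _ = 4 * (Real.sqrt x - Real.sqrt y) ^ 2 := by ring
  have key := sqrt_mul_log_sub_le (Real.sqrt x) (Real.sqrt y)
    (Real.sqrt_pos.mpr hy) (Real.sqrt_le_sqrt hxy)
  rw [Real.log_sqrt hx.le, Real.log_sqrt hy.le] at key
  have hlognn : 0 ≤ Real.log x - Real.log y := by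
    have := Real.log_le_log hy hxy
    linarith
  have hsq : Real.sqrt (Real.sqrt x * Real.sqrt y) ^ 2 = Real.sqrt x * Real.sqrt y :=
    Real.sq_sqrt (by positivity)
  have hkeynn : 0 ≤ Real.sqrt (Real.sqrt x * Real.sqrt y) * (Real.log x / 2 - Real.log y / 2) := by
    have : (0:ℝ) ≤ Real.log x / 2 - Real.log y / 2 := by linarith
    positivity
  nlinarith [mul_self_nonneg (Real.sqrt (Real.sqrt x * Real.sqrt y) * (Real.log x / 2 - Real.log y / 2)), sq_nonneg (Real.sqrt x - Real.sqrt y), mul_le_mul key key hkeynn (sub_nonneg.mpr (Real.sqrt_le_sqrt hxy)), hsq]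

set_option maxHeartbeats 1000000 in
/-- `h(x,y,ω) ≤ f_H(x,y)·(1 + 2|ω|)²`. -/
theorem h_le_hellinger_weighted :
    ∀ x ∈ Set.Ioc (0 : ℝ) 1, ∀ y ∈ Set.Ioc (0 : ℝ) 1, ∀ ω : ℝ,
      h x y ω ≤ fH x y * (1 + 2 * |ω|) ^ 2 := by
  rintro x ⟨hx0, hx1⟩ y ⟨hy0, hy1⟩ ω
  set a := Real.sqrt x with ha
  set b := Real.sqrt y with hb
  set θ := ω * Real.log x - ω * Real.log y with hθ
  have hcos : Real.cos (ω * Real.log x) * Real.cos (ω * Real.log y) +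
      Real.sin (ω * Real.log x) * Real.sin (ω * Real.log y) = Real.cos θ := by
    rw [hθ, Real.cos_sub]
  have p1 := Real.sin_sq_add_cos_sq (ω * Real.log x)
  have p2 := Real.sin_sq_add_cos_sq (ω * Real.log y)
  have hh : h x y ω = fH x y + 2 * a * b * (1 - Real.cos θ) := by
    unfold h fH
    rw [← ha, ← hb]
    linear_combination a ^ 2 * p1 + b ^ 2 * p2 - 2 * a * b * hcos
  have hc : 1 - Real.cos θ ≤ θ ^ 2 / 2 := by
    have h1 := Real.sin_sq_le_sq (x := θ / 2)
    have h3 : Real.cos θ = 2 * Real.cos (θ / 2) ^ 2 - 1 := by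
      rw [← Real.cos_two_mul]
      congr 1
      ring
    nlinarith [Real.sin_sq_add_cos_sq (θ / 2)]
  have hkey := sqrt_log_sq_le x y hx0 hy0
  rw [← ha, ← hb] at hkey
  have hab : 0 ≤ a * b := by positivity
  have hfH : fH x y = (a - b) ^ 2 := rfl
  have hθsq : θ ^ 2 = ω ^ 2 * (Real.log x - Real.log y) ^ 2 := by rw [hθ]; ring
  have hωnn : 0 ≤ |ω| := abs_nonneg ω
  have hωsq : |ω| ^ 2 = ω ^ 2 := sq_abs ω
  have step1 : 2 * a * b * (1 - Real.cos θ) ≤ a * b * θ ^ 2 := by nlinarith [hc, hab]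
  have step2 : a * b * θ ^ 2 ≤ 4 * ω ^ 2 * (a - b) ^ 2 := by
    rw [hθsq]
    nlinarith [mul_le_mul_of_nonneg_left hkey (sq_nonneg ω)]
  rw [hh, hfH]
  nlinarith [sq_nonneg (a - b), step1, step2, hωnn, hωsq, sq_nonneg ((a-b)*|ω|)]
end

section
/- (Deterministic additive-error embedding of χ² into ℓ₂²) There is an absolute constant C > 0 such that for every integer d ≥ 1 and every ε ∈ (0,1) there exist an integer m ≤ C·(d²/ε)·ln(d/ε) and a map φ : Δ_d → ℝ^m such that for all p, q ∈ Δ_d: |‖φ(p) − φ(q)‖₂² − χ²(p,q)| ≤ ε. -/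
open Real

/-- The symmetrized χ² divergence on the simplex `Δ_d`. -/
noncomputable def chiSq {d : ℕ} (p q : Fin d → ℝ) : ℝ := ∑ i, fChi (p i) (q i)

open Finset

lemma gsum_upper (t0 r a : ℝ) (ht0 : 0 < t0) (hr : 1 < r) (ha : 0 < a) (K : ℕ) :
    ∑ k ∈ range K, (t0 * r ^ k * (r - 1)) * exp (-(a * (t0 * r ^ k))) ≤ r / a := by
  have hr0 : (0:ℝ) < r := by linarith
  have key : ∀ k, (t0 * r ^ k * (r - 1)) * exp (-(a * (t0 * r ^ k))) ≤
      (r / a) * (exp (-(a * (t0 * r ^ k) / r)) - exp (-(a * (t0 * r ^ k)))) := by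
    intro k
    set t := t0 * r ^ k with htdef
    have ht : 0 < t := by positivity
    have hs : a * t * (r - 1) / r + 1 ≤ exp (a * t * (r - 1) / r) := Real.add_one_le_exp _
    have hexp : exp (-(a * t / r)) = exp (a * t * (r-1)/r) * exp (-(a*t)) := by
      rw [← Real.exp_add]; congr 1; field_simp; ring
    rw [hexp]
    have hE := Real.exp_pos (-(a*t))
    have h1 : (r/a) * ((a * t * (r-1)/r + 1) * exp (-(a*t)) - exp (-(a*t)))
        ≤ (r/a) * (exp (a * t * (r-1)/r) * exp (-(a*t)) - exp (-(a*t))) := by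
      apply mul_le_mul_of_nonneg_left _ (by positivity)
      have := mul_le_mul_of_nonneg_right hs hE.le
      linarith
    refine le_trans (le_of_eq ?_) h1
    field_simp
    ring
  calc ∑ k ∈ range K, (t0 * r ^ k * (r - 1)) * exp (-(a * (t0 * r ^ k)))
      ≤ ∑ k ∈ range K, (r / a) * (exp (-(a * (t0 * r ^ k) / r)) - exp (-(a * (t0 * r ^ k)))) :=
        sum_le_sum fun k _ => key k
    _ = (r/a) * ∑ k ∈ range K, (exp (-(a * (t0 * r ^ k) / r)) - exp (-(a * (t0 * r ^ (k+1)) / r))) := by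
        rw [← mul_sum]
        congr 1
        refine sum_congr rfl fun k _ => ?_
        congr 2
        congr 1
        field_simp
        ring
    _ = (r/a) * (exp (-(a * (t0 * r ^ 0) / r)) - exp (-(a * (t0 * r ^ K) / r))) := by
        rw [Finset.sum_range_sub' (fun k => exp (-(a * (t0 * r ^ k) / r))) K]
    _ ≤ (r/a) * 1 := by
        apply mul_le_mul_of_nonneg_left _ (by positivity)
        have h2 : exp (-(a * (t0 * r ^ 0) / r)) ≤ 1 := by
          apply Real.exp_le_one_iff.mpr
          have : 0 < a * (t0 * r ^ 0) / r := by positivity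
          linarith
        have := Real.exp_pos (-(a * (t0 * r ^ K) / r))
        linarith
    _ = r / a := mul_one _

lemma gsum_lower (t0 r a : ℝ) (ht0 : 0 < t0) (hr : 1 < r) (ha : 0 < a) (K : ℕ) :
    1/a - t0 - exp (-(a * (t0 * r ^ K)))/a
      ≤ ∑ k ∈ range K, (t0 * r ^ k * (r - 1)) * exp (-(a * (t0 * r ^ k))) := by
  have hr0 : (0:ℝ) < r := by linarith
  have key : ∀ k, (1/a) * (exp (-(a * (t0 * r ^ k))) - exp (-(a * (t0 * r ^ (k+1)))))
      ≤ (t0 * r ^ k * (r - 1)) * exp (-(a * (t0 * r ^ k))) := by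
    intro k
    set t := t0 * r ^ k with htdef
    have ht : 0 < t := by positivity
    have hexp : exp (-(a * (t0 * r ^ (k+1)))) = exp (-(a*t*(r-1))) * exp (-(a*t)) := by
      rw [← Real.exp_add]; congr 1; rw [htdef]; ring
    rw [hexp]
    have hs : -(a*t*(r-1)) + 1 ≤ exp (-(a*t*(r-1))) := Real.add_one_le_exp _
    have hE := Real.exp_pos (-(a*t))
    have h1 : exp (-(a*t)) - exp (-(a*t*(r-1))) * exp (-(a*t)) ≤ a*t*(r-1) * exp (-(a*t)) := by
      nlinarith
    have h2 : (1/a) * (exp (-(a*t)) - exp (-(a*t*(r-1))) * exp (-(a*t)))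
        ≤ (1/a) * (a*t*(r-1) * exp (-(a*t))) := by
      apply mul_le_mul_of_nonneg_left h1 (by positivity)
    refine le_trans h2 (le_of_eq ?_)
    field_simp
  calc 1/a - t0 - exp (-(a * (t0 * r ^ K)))/a
      ≤ (1/a) * (exp (-(a * (t0 * r ^ 0))) - exp (-(a * (t0 * r ^ K)))) := by
        have h3 : 1 - a*t0 ≤ exp (-(a * (t0 * r ^ 0))) := by
          have := Real.add_one_le_exp (-(a * (t0 * r ^ 0)))
          simp only [pow_zero, mul_one] at this ⊢
          linarith
        have hE := Real.exp_pos (-(a * (t0 * r ^ K)))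
        have : (1/a) * (exp (-(a * (t0 * r ^ 0))) - exp (-(a * (t0 * r ^ K))))
            ≥ (1/a) * ((1 - a*t0) - exp (-(a * (t0 * r ^ K)))) := by
          apply mul_le_mul_of_nonneg_left _ (by positivity)
          simp only [pow_zero, mul_one] at h3 ⊢
          linarith
        refine le_trans (le_of_eq ?_) this
        field_simp
    _ = ∑ k ∈ range K, (1/a) * (exp (-(a * (t0 * r ^ k))) - exp (-(a * (t0 * r ^ (k+1))))) := by
        rw [← mul_sum, Finset.sum_range_sub' (fun k => exp (-(a * (t0 * r ^ k)))) K]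
    _ ≤ _ := sum_le_sum fun k _ => key k

lemma fChi_eq (x y : ℝ) (hx : 0 ≤ x) (hy : 0 ≤ y) :
    fChi x y = x + y - 4*(x*y)/(x+y) := by
  rcases eq_or_lt_of_le (by linarith : (0:ℝ) ≤ x + y) with h | h
  · have hx0 : x = 0 := by linarith
    have hy0 : y = 0 := by linarith
    simp [fChi, hx0, hy0]
  · rw [fChi]
    field_simp
    ring

lemma tail_term (u θ T : ℝ) (hu : 0 ≤ u) (hθ : 0 < θ) (hT : 0 ≤ T) :
    u * exp (-(u*T)) ≤ θ + u * exp (-(θ*T)) := by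
  rcases le_or_gt u θ with h | h
  · have h1 : exp (-(u*T)) ≤ 1 := Real.exp_le_one_iff.mpr (by nlinarith)
    have h2 : 0 ≤ u * exp (-(θ*T)) := by positivity
    nlinarith
  · have h1 : exp (-(u*T)) ≤ exp (-(θ*T)) := Real.exp_le_exp.mpr (by nlinarith)
    nlinarith

lemma diag_bound (t0 r : ℝ) (ht0 : 0 < t0) (hr : 1 < r) (K : ℕ) (x : ℝ) (hx : 0 ≤ x) :
    |2*x^2 * (∑ k ∈ range K, (t0 * r ^ k * (r - 1)) * exp (-(2*x * (t0 * r ^ k)))) - x|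
      ≤ (r-1)*x + 2*t0*x^2 + x * exp (-(x * (t0 * r ^ K))) := by
  rcases eq_or_lt_of_le hx with h | hx0
  · simp [← h]
  · set A := ∑ k ∈ range K, (t0 * r ^ k * (r - 1)) * exp (-(2*x * (t0 * r ^ k))) with hA
    set T := t0 * r ^ K with hT
    have hTpos : 0 < T := by positivity
    have hup := gsum_upper t0 r (2*x) ht0 hr (by linarith) K
    have hlo := gsum_lower t0 r (2*x) ht0 hr (by linarith) K
    rw [← hA] at hup hlo
    have h1 : 2*x^2 * A ≤ 2*x^2 * (r/(2*x)) := by nlinarith [sq_nonneg x]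
    have h2 : 2*x^2 * (r/(2*x)) = r * x := by field_simp
    have h3 : 2*x^2 * (1/(2*x) - t0 - exp (-(2*x * T))/(2*x)) ≤ 2*x^2 * A := by
      nlinarith [sq_nonneg x]
    have h4 : 2*x^2 * (1/(2*x) - t0 - exp (-(2*x * T))/(2*x))
        = x - 2*t0*x^2 - x * exp (-(2*x*T)) := by field_simp
    have h5 : exp (-(2*x*T)) ≤ exp (-(x*T)) := Real.exp_le_exp.mpr (by nlinarith)
    rw [abs_le]
    constructor
    · have := Real.exp_pos (-(x*T))
      nlinarith
    · nlinarith [Real.exp_pos (-(x*T))]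

lemma cross_bound (t0 r : ℝ) (ht0 : 0 < t0) (hr : 1 < r) (K : ℕ) (x y : ℝ)
    (hx : 0 ≤ x) (hy : 0 ≤ y) :
    |4*(x*y) * (∑ k ∈ range K, (t0 * r ^ k * (r - 1)) * exp (-((x+y) * (t0 * r ^ k)))) - 4*(x*y)/(x+y)|
      ≤ (r-1)*(x+y) + t0*(x+y)^2 + (x+y) * exp (-((x+y) * (t0 * r ^ K))) := by
  have hRHS : 0 ≤ (r-1)*(x+y) + t0*(x+y)^2 + (x+y) * exp (-((x+y) * (t0 * r ^ K))) := by
    have := Real.exp_pos (-((x+y) * (t0 * r ^ K)))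
    have h1 : 0 ≤ x + y := by linarith
    nlinarith
  rcases eq_or_lt_of_le hx with h | hx0
  · simp only [← h, mul_zero, zero_mul, mul_comm, zero_div, sub_zero, abs_zero, zero_add]
    have h1 := (Real.exp_pos (-(y * (t0 * r ^ K)))).le
    nlinarith [mul_nonneg hy h1, mul_nonneg hy (by linarith : (0:ℝ) ≤ r - 1), sq_nonneg y]
  rcases eq_or_lt_of_le hy with h | hy0
  · simp only [← h, mul_zero, zero_mul, mul_comm, zero_div, sub_zero, abs_zero, add_zero]
    have h1 := (Real.exp_pos (-(x * (t0 * r ^ K)))).le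
    nlinarith [mul_nonneg hx h1, mul_nonneg hx (by linarith : (0:ℝ) ≤ r - 1), sq_nonneg x]
  set s := x + y with hs
  have hs0 : 0 < s := by positivity
  have hsxy : 4*(x*y) ≤ s^2 := by rw [hs]; nlinarith [sq_nonneg (x-y)]
  clear_value s
  set A := ∑ k ∈ range K, (t0 * r ^ k * (r - 1)) * exp (-(s * (t0 * r ^ k))) with hA
  set T := t0 * r ^ K with hT
  have hTpos : 0 < T := by positivity
  have hup := gsum_upper t0 r s ht0 hr hs0 K
  have hlo := gsum_lower t0 r s ht0 hr hs0 K
  rw [← hA] at hup hlo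
  rw [← hT] at hlo
  clear_value A T
  have hxy : 0 < 4*(x*y) := by positivity
  have hxys : 4*(x*y) ≤ s^2 := hsxy
  have hc : 4*(x*y)/s ≤ s := by rw [div_le_iff₀ hs0]; nlinarith
  have h1 : 4*(x*y) * A - 4*(x*y)/s ≤ (r-1)*s := by
    have ha : 4*(x*y) * A ≤ 4*(x*y) * (r/s) := mul_le_mul_of_nonneg_left hup (by positivity)
    have hb : 4*(x*y) * (r/s) - 4*(x*y)/s = (4*(x*y)/s)*(r-1) := by field_simp
    have hd : (4*(x*y)/s)*(r-1) ≤ s*(r-1) :=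
      mul_le_mul_of_nonneg_right hc (by linarith)
    nlinarith
  have h2 : 4*(x*y)/s - 4*(x*y) * A ≤ t0*s^2 + s * exp (-(s*T)) := by
    have ha : 4*(x*y) * (1/s - t0 - exp (-(s * T))/s) ≤ 4*(x*y) * A :=
      mul_le_mul_of_nonneg_left hlo (by positivity)
    have hb : 4*(x*y) * (1/s - t0 - exp (-(s * T))/s)
        = 4*(x*y)/s - t0*(4*(x*y)) - (4*(x*y)/s) * exp (-(s*T)) := by field_simp
    rw [hb] at ha
    have hd := Real.exp_pos (-(s*T))
    have h1' : (4*(x*y)/s) * exp (-(s*T)) ≤ s * exp (-(s*T)) :=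
      mul_le_mul_of_nonneg_right hc hd.le
    have h2' : t0 * (4*(x*y)) ≤ t0 * s^2 := mul_le_mul_of_nonneg_left hxys ht0.le
    linarith
  rw [abs_le]
  have h3 : 0 ≤ (r-1)*s := by nlinarith
  have h4 : 0 ≤ t0*s^2 := by positivity
  have h5 : 0 ≤ s * exp (-(s*T)) := by positivity
  constructor
  · linarith
  · linarith

lemma sq_expand (x y t : ℝ) :
    (x * exp (-(x*t)) - y * exp (-(y*t)))^2
      = x^2 * exp (-(2*x*t)) - 2*(x*y) * exp (-((x+y)*t)) + y^2 * exp (-(2*y*t)) := by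
  have h1 : exp (-(x*t)) * exp (-(x*t)) = exp (-(2*x*t)) := by rw [← Real.exp_add]; ring_nf
  have h2 : exp (-(y*t)) * exp (-(y*t)) = exp (-(2*y*t)) := by rw [← Real.exp_add]; ring_nf
  have h3 : exp (-(x*t)) * exp (-(y*t)) = exp (-((x+y)*t)) := by rw [← Real.exp_add]; ring_nf
  linear_combination x^2*h1 + y^2*h2 - 2*x*y*h3

lemma coord_bound (t0 r : ℝ) (ht0 : 0 < t0) (hr : 1 < r) (K : ℕ) (x y : ℝ)
    (hx : 0 ≤ x) (hy : 0 ≤ y) :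
    |(∑ k ∈ range K, (2*(t0 * r ^ k * (r - 1))) *
        (x * exp (-(x * (t0 * r ^ k))) - y * exp (-(y * (t0 * r ^ k))))^2) - fChi x y|
      ≤ 2*(r-1)*(x+y) + 3*t0*(x+y)^2
        + x * exp (-(x * (t0 * r ^ K))) + y * exp (-(y * (t0 * r ^ K)))
        + (x+y) * exp (-((x+y) * (t0 * r ^ K))) := by
  have hexpand : (∑ k ∈ range K, (2*(t0 * r ^ k * (r - 1))) *
        (x * exp (-(x * (t0 * r ^ k))) - y * exp (-(y * (t0 * r ^ k))))^2)
      = 2*x^2 * (∑ k ∈ range K, (t0 * r ^ k * (r - 1)) * exp (-(2*x * (t0 * r ^ k))))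
        - 4*(x*y) * (∑ k ∈ range K, (t0 * r ^ k * (r - 1)) * exp (-((x+y) * (t0 * r ^ k))))
        + 2*y^2 * (∑ k ∈ range K, (t0 * r ^ k * (r - 1)) * exp (-(2*y * (t0 * r ^ k)))) := by
    rw [Finset.mul_sum, Finset.mul_sum, Finset.mul_sum, ← Finset.sum_sub_distrib,
      ← Finset.sum_add_distrib]
    refine sum_congr rfl fun k _ => ?_
    rw [sq_expand x y (t0 * r ^ k)]
    ring
  rw [hexpand, fChi_eq x y hx hy]
  have hd1 := diag_bound t0 r ht0 hr K x hx
  have hd2 := diag_bound t0 r ht0 hr K y hy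
  have hc := cross_bound t0 r ht0 hr K x y hx hy
  set A1 := 2*x^2 * (∑ k ∈ range K, (t0 * r ^ k * (r - 1)) * exp (-(2*x * (t0 * r ^ k))))
  set A2 := 2*y^2 * (∑ k ∈ range K, (t0 * r ^ k * (r - 1)) * exp (-(2*y * (t0 * r ^ k))))
  set A3 := 4*(x*y) * (∑ k ∈ range K, (t0 * r ^ k * (r - 1)) * exp (-((x+y) * (t0 * r ^ k))))
  have key : |A1 - A3 + A2 - (x + y - 4*(x*y)/(x+y))|
      ≤ |A1 - x| + |A2 - y| + |A3 - 4*(x*y)/(x+y)| := by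
    have : A1 - A3 + A2 - (x + y - 4*(x*y)/(x+y))
        = (A1 - x) + (A2 - y) - (A3 - 4*(x*y)/(x+y)) := by ring
    rw [this]
    calc |(A1 - x) + (A2 - y) - (A3 - 4*(x*y)/(x+y))|
        ≤ |(A1 - x) + (A2 - y)| + |A3 - 4*(x*y)/(x+y)| := abs_sub _ _
      _ ≤ |A1 - x| + |A2 - y| + |A3 - 4*(x*y)/(x+y)| := by
          have := abs_add_le (A1 - x) (A2 - y); linarith
  refine le_trans key ?_
  have hxy : 0 ≤ x*y := mul_nonneg hx hy
  nlinarith [ht0, hxy]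

lemma tail_sum {d : ℕ} (u : Fin d → ℝ) (hu : ∀ i, 0 ≤ u i) (c θ T : ℝ)
    (hθ : 0 < θ) (hT : 0 ≤ T) (hsum : ∑ i, u i = c) :
    ∑ i, u i * exp (-(u i * T)) ≤ d*θ + c * exp (-(θ*T)) := by
  calc ∑ i, u i * exp (-(u i * T)) ≤ ∑ i : Fin d, (θ + u i * exp (-(θ*T))) :=
        sum_le_sum fun i _ => tail_term (u i) θ T (hu i) hθ hT
    _ = d*θ + c * exp (-(θ*T)) := by
        rw [sum_add_distrib, ← sum_mul, hsum, sum_const, card_univ]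
        simp [nsmul_eq_mul]

set_option maxHeartbeats 2000000 in
/-- deterministic additive-error embedding of χ² into `ℓ₂²` in
`O((d²/ε)·log(d/ε))` dimensions. -/
theorem chiSq_additive_embedding :
    ∃ C : ℝ, 0 < C ∧
      ∀ d : ℕ, 1 ≤ d → ∀ ε : ℝ, ε ∈ Set.Ioo (0 : ℝ) 1 →
        ∃ (m : ℕ) (φ : (Fin d → ℝ) → EuclideanSpace ℝ (Fin m)),
          (m : ℝ) ≤ C * ((d : ℝ) ^ 2 / ε) * Real.log ((d : ℝ) / ε) ∧
          ∀ p ∈ stdSimplex ℝ (Fin d), ∀ q ∈ stdSimplex ℝ (Fin d),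
            |‖φ p - φ q‖ ^ 2 - chiSq p q| ≤ ε := by
  refine ⟨1000, by norm_num, fun d hd ε hε => ?_⟩
  obtain ⟨hε0, hε1⟩ := hε
  rcases eq_or_lt_of_le hd with hd1 | hd2
  · -- d = 1
    subst hd1
    refine ⟨0, fun _ => 0, ?_, ?_⟩
    · have h1 : (1:ℝ) < ((1:ℕ):ℝ)/ε := by
        push_cast
        rw [lt_div_iff₀ hε0]; linarith
      have h2 : 0 < Real.log (((1:ℕ):ℝ)/ε) := Real.log_pos h1
      have h3 : (0:ℝ) < 1000 * (((1:ℕ):ℝ) ^ 2 / ε) * Real.log (((1:ℕ):ℝ) / ε) := by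
        apply mul_pos (by push_cast; positivity) h2
      simpa using h3.le
    · intro p hp q hq
      have hp1 : p 0 = 1 := by
        have := hp.2
        rwa [Fin.sum_univ_one] at this
      have hq1 : q 0 = 1 := by
        have := hq.2
        rwa [Fin.sum_univ_one] at this
      have hchi : chiSq p q = 0 := by
        rw [chiSq, Fin.sum_univ_one, hp1, hq1]; simp [fChi]
      rw [hchi, sub_self, norm_zero]
      norm_num; linarith
  · -- d ≥ 2
    have hd0 : 0 < d := by omega
    have hdR : (2:ℝ) ≤ (d:ℝ) := by exact_mod_cast hd2
    have hdR0 : (0:ℝ) < (d:ℝ) := by linarith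
    obtain ⟨t0, ht0def⟩ : ∃ x : ℝ, x = ε/48 := ⟨_, rfl⟩
    obtain ⟨r, hrdef⟩ : ∃ x : ℝ, x = 1 + ε/16 := ⟨_, rfl⟩
    have ht0 : 0 < t0 := by rw [ht0def]; positivity
    have hr : 1 < r := by rw [hrdef]; linarith
    have hr0 : (0:ℝ) < r := by linarith
    obtain ⟨L, hLdef⟩ : ∃ x : ℝ, x = Real.log (9216 * d / ε^3) := ⟨_, rfl⟩
    have hL0 : 0 ≤ L := by
      rw [hLdef]
      apply Real.log_nonneg
      rw [le_div_iff₀ (by positivity)]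
      nlinarith [pow_le_one₀ hε0.le hε1.le (n := 3)]
    obtain ⟨K, hKdef⟩ : ∃ n : ℕ, n = ⌈(32/ε) * L⌉₊ := ⟨_, rfl⟩
    obtain ⟨T, hTdef⟩ : ∃ x : ℝ, x = t0 * r ^ K := ⟨_, rfl⟩
    have hTpos : 0 < T := by rw [hTdef]; positivity
    -- lower bound on T
    have hlogr : ε/32 ≤ Real.log r := by
      have h1 : Real.log r⁻¹ ≤ r⁻¹ - 1 := Real.log_le_sub_one_of_pos (by positivity)
      rw [Real.log_inv] at h1
      have h2 : r * r⁻¹ = 1 := mul_inv_cancel₀ (ne_of_gt hr0)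
      have h3 : r⁻¹ ≤ 1 - ε/32 := by nlinarith
      linarith
    have hKge : (32/ε) * L ≤ (K:ℝ) := by rw [hKdef]; exact Nat.le_ceil _
    have hKlog : L ≤ (K:ℝ) * Real.log r := by
      have h1 : (32/ε) * L * (ε/32) ≤ (K:ℝ) * (ε/32) :=
        mul_le_mul_of_nonneg_right hKge (by positivity)
      have h2 : (32/ε) * L * (ε/32) = L := by field_simp
      have h3 : (K:ℝ) * (ε/32) ≤ (K:ℝ) * Real.log r :=
        mul_le_mul_of_nonneg_left hlogr (Nat.cast_nonneg K)
      linarith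
    have hrK : 9216 * d / ε^3 ≤ r ^ K := by
      have h1 : r ^ K = Real.exp ((K:ℝ) * Real.log r) := by
        rw [Real.exp_nat_mul, Real.exp_log hr0]
      have h2 : (9216 : ℝ) * d / ε^3 = Real.exp L := by
        rw [hLdef, Real.exp_log (by positivity)]
      rw [h1, h2]
      exact Real.exp_le_exp.mpr hKlog
    have hT : 12*d/ε * Real.log (16/ε) ≤ T := by
      have h1 : Real.log (16/ε) ≤ 16/ε := by
        have := Real.log_le_sub_one_of_pos (by positivity : (0:ℝ) < 16/ε)
        linarith
      have h2 : 12*d/ε * Real.log (16/ε) ≤ 12*d/ε * (16/ε) :=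
        mul_le_mul_of_nonneg_left h1 (by positivity)
      have h3 : (12:ℝ)*d/ε * (16/ε) = 192*d/ε^2 := by field_simp; ring
      have h4 : (ε/48) * (9216 * d / ε^3) = 192*d/ε^2 := by field_simp; ring
      have h5 : (ε/48) * (9216 * d / ε^3) ≤ (ε/48) * r^K :=
        mul_le_mul_of_nonneg_left hrK (by positivity)
      have hT48 : T = ε/48 * r ^ K := by rw [hTdef, ht0def]
      rw [hT48]
      linarith
    refine ⟨d * K, fun p => (WithLp.toLp 2 (fun j : Fin (d*K) =>
      Real.sqrt (2*(t0 * r ^ (((finProdFinEquiv.symm j).2 : Fin K) : ℕ) * (r - 1))) *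
        (p (finProdFinEquiv.symm j).1 *
          exp (-(p (finProdFinEquiv.symm j).1 * (t0 * r ^ (((finProdFinEquiv.symm j).2 : Fin K) : ℕ))))))
      : EuclideanSpace ℝ (Fin (d*K))), ?_, ?_⟩
    · -- dimension bound
      have hlam : Real.log 2 ≤ Real.log ((d:ℝ)/ε) := by
        apply Real.log_le_log (by norm_num)
        rw [le_div_iff₀ hε0]; nlinarith
      have hlam0 : 0 < Real.log ((d:ℝ)/ε) := lt_of_lt_of_le (Real.log_pos one_lt_two) hlam
      have hL18 : L ≤ 18 * Real.log ((d:ℝ)/ε) := by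
        have h1 : (9216:ℝ) * d / ε^3 ≤ ((d:ℝ)/ε)^18 := by
          rw [div_pow]
          apply div_le_div₀ (by positivity) ?_ (by positivity) ?_
          · have h2 : (2:ℝ)^17 * d ≤ (d:ℝ)^18 := by
              have : (2:ℝ)^17 ≤ (d:ℝ)^17 := pow_le_pow_left₀ (by norm_num) hdR 17
              calc (2:ℝ)^17 * d ≤ (d:ℝ)^17 * d := by nlinarith
                _ = (d:ℝ)^18 := by ring
            nlinarith
          · calc ε^18 ≤ ε^3 := pow_le_pow_of_le_one hε0.le hε1.le (by norm_num)
              _ ≤ ε^3 := le_refl _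
        calc L = Real.log (9216 * d / ε^3) := hLdef
          _ ≤ Real.log (((d:ℝ)/ε)^18) := Real.log_le_log (by positivity) h1
          _ = 18 * Real.log ((d:ℝ)/ε) := by rw [Real.log_pow]; push_cast; ring
      have hK1 : (K:ℝ) ≤ (32/ε) * L + 1 := by
        rw [hKdef]
        exact (Nat.ceil_lt_add_one (by positivity : (0:ℝ) ≤ (32/ε) * L)).le
      have hKup : (K:ℝ) * ε ≤ 32 * L + ε := by
        have := mul_le_mul_of_nonneg_right hK1 hε0.le
        have h2 : ((32/ε) * L + 1) * ε = 32 * L + ε := by field_simp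
        linarith
      push_cast
      rw [show (1000:ℝ) * ((d:ℝ)^2/ε) * Real.log ((d:ℝ)/ε)
          = (1000 * (d:ℝ)^2 * Real.log ((d:ℝ)/ε))/ε from by ring, le_div_iff₀ hε0]
      have hlam06 : (0.69:ℝ) ≤ Real.log ((d:ℝ)/ε) := by
        have := Real.log_two_gt_d9
        linarith
      have h3 : (d:ℝ) * (K:ℝ) * ε = (d:ℝ) * ((K:ℝ) * ε) := by ring
      rw [h3]
      have h4 : (d:ℝ) * ((K:ℝ) * ε) ≤ (d:ℝ) * (32 * L + ε) :=
        mul_le_mul_of_nonneg_left hKup (by positivity)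
      have h5 : (d:ℝ) * (32 * L + ε) ≤ (d:ℝ) * (576 * Real.log ((d:ℝ)/ε) + 1) := by
        apply mul_le_mul_of_nonneg_left _ (by positivity)
        linarith
      have h8 : 0 ≤ (d:ℝ) * Real.log ((d:ℝ)/ε) * ((d:ℝ) - 2) :=
        mul_nonneg (mul_nonneg hdR0.le hlam0.le) (by linarith)
      have h10 : 0.69 * (d:ℝ) ≤ Real.log ((d:ℝ)/ε) * (d:ℝ) :=
        mul_le_mul_of_nonneg_right hlam06 hdR0.le
      nlinarith [h4, h5, h8, h10]
    · -- approximation bound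
      intro p hp q hq
      have hp0 : ∀ i, 0 ≤ p i := hp.1
      have hq0 : ∀ i, 0 ≤ q i := hq.1
      have hps : ∑ i, p i = 1 := hp.2
      have hqs : ∑ i, q i = 1 := hq.2
      have hp1 : ∀ i, p i ≤ 1 := by
        intro i
        have := Finset.single_le_sum (f := p) (fun j _ => hp0 j) (mem_univ i)
        rw [hps] at this; exact this
      have hq1 : ∀ i, q i ≤ 1 := by
        intro i
        have := Finset.single_le_sum (f := q) (fun j _ => hq0 j) (mem_univ i)
        rw [hqs] at this; exact this
      set φp : EuclideanSpace ℝ (Fin (d*K)) := WithLp.toLp 2 (fun j : Fin (d*K) =>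
        Real.sqrt (2*(t0 * r ^ (((finProdFinEquiv.symm j).2 : Fin K) : ℕ) * (r - 1))) *
          (p (finProdFinEquiv.symm j).1 *
            exp (-(p (finProdFinEquiv.symm j).1 * (t0 * r ^ (((finProdFinEquiv.symm j).2 : Fin K) : ℕ)))))) with hφp
      set φq : EuclideanSpace ℝ (Fin (d*K)) := WithLp.toLp 2 (fun j : Fin (d*K) =>
        Real.sqrt (2*(t0 * r ^ (((finProdFinEquiv.symm j).2 : Fin K) : ℕ) * (r - 1))) *
          (q (finProdFinEquiv.symm j).1 *
            exp (-(q (finProdFinEquiv.symm j).1 * (t0 * r ^ (((finProdFinEquiv.symm j).2 : Fin K) : ℕ)))))) with hφq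
      have hnorm : ‖φp - φq‖^2 = ∑ i : Fin d, ∑ k ∈ range K, (2*(t0 * r ^ k * (r - 1))) *
          (p i * exp (-(p i * (t0 * r ^ k))) - q i * exp (-(q i * (t0 * r ^ k))))^2 := by
        rw [EuclideanSpace.norm_eq, Real.sq_sqrt (by positivity)]
        have hw : ∀ k : ℕ, (0:ℝ) ≤ 2*(t0 * r ^ k * (r - 1)) := by
          intro k
          have h1 := pow_pos hr0 k
          have h2 : 0 ≤ t0 * r ^ k := mul_nonneg ht0.le h1.le
          nlinarith [mul_nonneg h2 (by linarith : (0:ℝ) ≤ r - 1)]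
        have step1 := Fintype.sum_equiv finProdFinEquiv
          (fun z : Fin d × Fin K =>
            (2*(t0 * r ^ (z.2 : ℕ) * (r - 1))) *
              (p z.1 * exp (-(p z.1 * (t0 * r ^ (z.2 : ℕ))))
                - q z.1 * exp (-(q z.1 * (t0 * r ^ (z.2 : ℕ)))))^2)
          (fun j : Fin (d*K) => ‖(φp - φq) j‖^2)
          (fun z => by
            dsimp only
            have hsub : (φp - φq) (finProdFinEquiv z) = φp (finProdFinEquiv z) - φq (finProdFinEquiv z) := rfl
            rw [hsub, Real.norm_eq_abs, sq_abs, hφp, hφq]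
            simp only [PiLp.toLp_apply, Equiv.symm_apply_apply]
            rw [← mul_sub, mul_pow, Real.sq_sqrt (hw _)])
        rw [← step1]
        rw [Fintype.sum_prod_type]
        refine Finset.sum_congr rfl fun i _ => ?_
        exact Fin.sum_univ_eq_sum_range (fun k => (2*(t0 * r ^ k * (r - 1))) *
          (p i * exp (-(p i * (t0 * r ^ k))) - q i * exp (-(q i * (t0 * r ^ k))))^2) K
      rw [hnorm]
      rw [chiSq, ← Finset.sum_sub_distrib]
      set θ : ℝ := ε/(12*d) with hθdef
      have hθ : 0 < θ := by positivity
      have hexpθ : exp (-(θ * T)) ≤ ε/16 := by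
        have h1 : Real.log (16/ε) ≤ θ * T := by
          have h2 := mul_le_mul_of_nonneg_left hT hθ.le
          have h3 : θ * (12*d/ε * Real.log (16/ε)) = Real.log (16/ε) := by
            rw [hθdef]; field_simp
          linarith
        have h4 : exp (-(θ*T)) ≤ exp (-(Real.log (16/ε))) :=
          Real.exp_le_exp.mpr (by linarith)
        have h6 : exp (-(Real.log (16/ε))) = ε/16 := by
          rw [Real.exp_neg, Real.exp_log (by positivity), inv_div]
        rw [h6] at h4; exact h4
      calc |∑ i : Fin d, ((∑ k ∈ range K, (2*(t0 * r ^ k * (r - 1))) *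
              (p i * exp (-(p i * (t0 * r ^ k))) - q i * exp (-(q i * (t0 * r ^ k))))^2)
            - fChi (p i) (q i))|
          ≤ ∑ i : Fin d, |(∑ k ∈ range K, (2*(t0 * r ^ k * (r - 1))) *
              (p i * exp (-(p i * (t0 * r ^ k))) - q i * exp (-(q i * (t0 * r ^ k))))^2)
            - fChi (p i) (q i)| := Finset.abs_sum_le_sum_abs _ _
        _ ≤ ∑ i : Fin d, (2*(r-1)*(p i + q i) + 3*t0*(p i + q i)^2
              + p i * exp (-(p i * T)) + q i * exp (-(q i * T))
              + (p i + q i) * exp (-((p i + q i) * T))) :=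
            Finset.sum_le_sum fun i _ => by
              rw [hTdef]; exact coord_bound t0 r ht0 hr K (p i) (q i) (hp0 i) (hq0 i)
        _ ≤ ε := by
            rw [Finset.sum_add_distrib, Finset.sum_add_distrib, Finset.sum_add_distrib,
              Finset.sum_add_distrib]
            have e1 : ∑ i, 2*(r-1)*(p i + q i) = 4*(r-1) := by
              rw [← Finset.mul_sum, Finset.sum_add_distrib, hps, hqs]; ring
            have e2 : ∑ i, 3*t0*(p i + q i)^2 ≤ 12*t0 := by
              have h1 : ∀ i ∈ univ, 3*t0*(p i + q i)^2 ≤ 3*t0*(2*(p i + q i)) := by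
                intro i _
                apply mul_le_mul_of_nonneg_left _ (by positivity)
                nlinarith [hp0 i, hq0 i, hp1 i, hq1 i]
              calc ∑ i, 3*t0*(p i + q i)^2 ≤ ∑ i, 3*t0*(2*(p i + q i)) :=
                    Finset.sum_le_sum h1
                _ = 12*t0 := by
                    simp only [← Finset.mul_sum]
                    rw [Finset.sum_add_distrib, hps, hqs]; ring
            have e3 : ∑ i, p i * exp (-(p i * T)) ≤ d*θ + 1 * exp (-(θ*T)) :=
              tail_sum p hp0 1 θ T hθ hTpos.le hps
            have e4 : ∑ i, q i * exp (-(q i * T)) ≤ d*θ + 1 * exp (-(θ*T)) :=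
              tail_sum q hq0 1 θ T hθ hTpos.le hqs
            have e5 : ∑ i, (p i + q i) * exp (-((p i + q i) * T)) ≤ d*θ + 2 * exp (-(θ*T)) := by
              apply tail_sum (fun i => p i + q i) (fun i => by
                have h1 := hp0 i; have h2 := hq0 i
                show (0:ℝ) ≤ p i + q i
                linarith) 2 θ T hθ hTpos.le
              rw [Finset.sum_add_distrib, hps, hqs]; norm_num
            have e6 : (d:ℝ)*θ = ε/12 := by
              rw [hθdef]; field_simp
            have h7 : exp (-(θ*T)) ≤ ε/16 := hexpθ
            have : 4*(r-1) = ε/4 := by rw [hrdef]; ring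
            linarith
end
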